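/- arXiv:0909.1424 — 2 statements merged into one kernel-verified Lean document; each statement's English description precedes it below -/
import Mathlib

section
/- Let {U1,U2} be a pair of negative skew-symmetric multisets on ℕ² with ψ^{-1}({U1,U2}) = {π1,π2}, π1 = (b_1…b_t / a_1…a_t), π2 = (c_1…c_t / d_1…d_t), and for 1 ≤ k ≤ t set U1^(k) := {(a_1,b_1),…,(a_k,b_k)}, U2^(k) := {(d_{t+1−k},c_{t+1−k}),…,(d_t,c_t)}, (P^(k),Q^(k)) := OBRSK(ψ^{-1}({U1^(k),U2^(k)})). Let p^(k)_1 < ⋯ < p^(k)_{2c_k} and q^(k)_1 < ⋯ < q^(k)_{2c_k} be the top rows of P^(k) and Q^(k), and let m(k) be the number of indices m with p^(k)_m < q^(k)_1. Then for every j with 1 ≤ j ≤ m(k) there exist a dual pair of chains {C1,C2} in {U1^(k),U2^(k)} having at most j elements in each of C1 and C2, and an integer χ ≥ j, such that the first coordinate of the χ-th element (in increasing order of first coordinates) of OBRSK(ψ^{-1}({C1,C2}))^up equals p^(k)_j, and every first coordinate of an element of C1 occurs among the first coordinates of the first χ elements of OBRSK(ψ^{-1}({C1,C2}))^up. -/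
namespace OBRSKPaper

/-! ### Pairs of two-row arrays -/

/-- A pair of two-row arrays of positive integers: `π1` has top row `b` and bottom row `a`;
`π2` has top row `c` and bottom row `d`.  Columns are listed from left to right. -/
structure ArrayPair where
  a : List ℕ
  b : List ℕ
  c : List ℕ
  d : List ℕ

/-- The duality property for a list of (entry, dual entry) pairs: if `x ≤ y` then
`dual x ≥ dual y`, if `x < y` then `dual x > dual y`, and if `x = y` then `dual x = dual y`. -/
def DualityProp (l : List (ℕ × ℕ)) : Prop :=
  ∀ p ∈ l, ∀ q ∈ l,
    (p.1 ≤ q.1 → q.2 ≤ p.2) ∧ (p.1 < q.1 → q.2 < p.2) ∧ (p.1 = q.1 → p.2 = q.2)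

/-- The two-row array with top row `top` and bottom row `bot` is lexicographic:
the top row weakly decreases, and bottom-row entries weakly decrease below equal
top-row entries. -/
def LexTwoRow (top bot : List ℕ) : Prop :=
  ∀ k, k + 1 < top.length →
    top.getD (k+1) 0 ≤ top.getD k 0 ∧
    (top.getD (k+1) 0 = top.getD k 0 → bot.getD (k+1) 0 ≤ bot.getD k 0)

namespace ArrayPair

/-- The number of columns of each array of the pair. -/
def t (π : ArrayPair) : ℕ := π.b.length

/-- The degree of a pair of arrays: twice the number of columns. -/
def degree (π : ArrayPair) : ℕ := 2 * π.t

def eqLen (π : ArrayPair) : Prop :=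
  π.a.length = π.t ∧ π.c.length = π.t ∧ π.d.length = π.t

/-- The list of (entry, dual entry) pairs of a pair of arrays: the dual of `a i` is
`c (t+1-i)`, of `b i` is `d (t+1-i)`, of `c i` is `a (t+1-i)`, of `d i` is `b (t+1-i)`. -/
def entryDual (π : ArrayPair) : List (ℕ × ℕ) :=
  π.a.zip π.c.reverse ++ π.b.zip π.d.reverse ++ π.c.zip π.a.reverse ++ π.d.zip π.b.reverse

/-- `{π1, π2}` is a pair of skew-symmetric lexicographic arrays. -/
def SkewSymmLex (π : ArrayPair) : Prop :=
  π.eqLen ∧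
  (∀ x ∈ π.a ++ π.b ++ π.c ++ π.d, 0 < x) ∧
  LexTwoRow π.b π.a ∧
  LexTwoRow π.d π.c ∧
  (∀ p ∈ π.a.zip π.d.reverse, p.1 < p.2) ∧
  (∀ p ∈ π.b.zip π.c.reverse, p.1 < p.2) ∧
  DualityProp π.entryDual ∧
  (∀ i < π.t,
    (π.a.getD i 0 < π.b.getD i 0 → π.d.getD (π.t - 1 - i) 0 < π.c.getD (π.t - 1 - i) 0) ∧
    (π.b.getD i 0 < π.a.getD i 0 → π.c.getD (π.t - 1 - i) 0 < π.d.getD (π.t - 1 - i) 0))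

def Negative (π : ArrayPair) : Prop := ∀ p ∈ π.a.zip π.b, p.1 < p.2

def Positive (π : ArrayPair) : Prop := ∀ p ∈ π.a.zip π.b, p.2 < p.1

def Nonvanishing (π : ArrayPair) : Prop := ∀ p ∈ π.a.zip π.b, p.1 ≠ p.2

/-- The negative part of a pair: the columns of `π1` with `a i < b i`, together with
their dual columns of `π2` (those with `d j < c j`). -/
def negPart (π : ArrayPair) : ArrayPair where
  a := ((π.a.zip π.b).filter (fun p => decide (p.1 < p.2))).map Prod.fst
  b := ((π.a.zip π.b).filter (fun p => decide (p.1 < p.2))).map Prod.snd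
  c := ((π.c.zip π.d).filter (fun p => decide (p.2 < p.1))).map Prod.fst
  d := ((π.c.zip π.d).filter (fun p => decide (p.2 < p.1))).map Prod.snd

/-- The positive part of a pair: the columns of `π1` with `a i > b i`, together with
their dual columns of `π2`. -/
def posPart (π : ArrayPair) : ArrayPair where
  a := ((π.a.zip π.b).filter (fun p => decide (p.2 < p.1))).map Prod.fst
  b := ((π.a.zip π.b).filter (fun p => decide (p.2 < p.1))).map Prod.snd
  c := ((π.c.zip π.d).filter (fun p => decide (p.1 < p.2))).map Prod.fst
  d := ((π.c.zip π.d).filter (fun p => decide (p.1 < p.2))).map Prod.snd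

/-- The bijection ψ from pairs of arrays to pairs of multisets on ℕ²:
`{(b/a),(c/d)} ↦ ({(a i, b i)}, {(d i, c i)})`. -/
def toMS (π : ArrayPair) : Multiset (ℕ × ℕ) × Multiset (ℕ × ℕ) :=
  (↑(π.a.zip π.b), ↑(π.d.zip π.c))

/-- The pair corresponding to `{U1^(k), U2^(k)}` : the first `k` columns of `π1`
together with the last `k` columns of `π2`. -/
def prefixPair (π : ArrayPair) (k : ℕ) : ArrayPair :=
  ⟨π.a.take k, π.b.take k, π.c.drop (π.t - k), π.d.drop (π.t - k)⟩

end ArrayPair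

/-- Comparison placing columns in decreasing lexicographic order. -/
def lexSortKey : ℕ × ℕ → ℕ × ℕ → Bool := fun x y =>
  decide (y.1 < x.1 ∨ (x.1 = y.1 ∧ y.2 ≤ x.2))

/-- The involution `L` : `L {π1, π2} := {l(π1), lᵗ(π2)}`, where `l` switches the two rows
and rearranges columns so that the result is lexicographic, and `lᵗ` switches the two rows
and rearranges columns so that the transpose of the result is lexicographic. -/
def Lmap (π : ArrayPair) : ArrayPair :=
  let s1 := (π.a.zip π.b).mergeSort lexSortKey
  let s2 := (π.c.zip π.d).mergeSort lexSortKey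
  ⟨s1.map Prod.snd, s1.map Prod.fst, s2.map Prod.snd, s2.map Prod.fst⟩

/-! ### Notched bitableaux -/

/-- A notched bitableau: a pair of fillings (lists of rows, top to bottom). -/
structure Bitab where
  P : List (List ℕ)
  Q : List (List ℕ)

/-- Count, as an integer, of entries of the list that are `≤ z`. -/
def cntLE (l : List ℕ) (z : ℕ) : ℤ := ((l.filter (fun x => decide (x ≤ z))).length : ℤ)

/-- `diffLE A B A' B'` expresses `A − B ≤ A' − B'` for the multisets
`A − B := A ∪̇ (ℕ∖B)`: for every `z`, the number of elements `≤ z` of `A − B` is at least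
the number of elements `≤ z` of `A' − B'`. -/
def diffLE (A B A' B' : List ℕ) : Prop :=
  ∀ z : ℕ, cntLE A' z - cntLE B' z ≤ cntLE A z - cntLE B z

/-- `diffLT A B A' B'` expresses `A − B < A' − B'`. -/
def diffLT (A B A' B' : List ℕ) : Prop := diffLE A B A' B' ∧ ¬ diffLE A' B' A B

namespace Bitab

/-- The degree: total number of boxes of `P`. -/
def degree (B : Bitab) : ℕ := (B.P.map List.length).sum

def SameShape (B : Bitab) : Prop := B.P.map List.length = B.Q.map List.length

def RowStrict (B : Bitab) : Prop :=
  (∀ r ∈ B.P, r.Pairwise (· < ·)) ∧ (∀ r ∈ B.Q, r.Pairwise (· < ·))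

def EntriesPos (B : Bitab) : Prop :=
  (∀ r ∈ B.P, ∀ x ∈ r, 0 < x) ∧ (∀ r ∈ B.Q, ∀ x ∈ r, 0 < x)

def Semistandard (B : Bitab) : Prop :=
  B.SameShape ∧ B.RowStrict ∧ B.EntriesPos ∧
  ∀ i, i + 1 < B.P.length →
    diffLE (B.P.getD i []) (B.Q.getD i []) (B.P.getD (i+1) []) (B.Q.getD (i+1) [])

/-- Negative: semistandard and the last row satisfies `P_r − Q_r < ∅`. -/
def Negative (B : Bitab) : Prop :=
  B.Semistandard ∧ ∀ i, B.P.length = i + 1 → diffLT (B.P.getD i []) (B.Q.getD i []) [] []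

/-- Positive: semistandard and the first row satisfies `∅ < P_1 − Q_1`. -/
def Positive (B : Bitab) : Prop :=
  B.Semistandard ∧ (B.P ≠ [] → diffLT [] [] (B.P.getD 0 []) (B.Q.getD 0 []))

/-- Nonvanishing: semistandard and every row is negative or positive. -/
def Nonvanishing (B : Bitab) : Prop :=
  B.Semistandard ∧ ∀ i < B.P.length,
    diffLT (B.P.getD i []) (B.Q.getD i []) [] [] ∨ diffLT [] [] (B.P.getD i []) (B.Q.getD i [])

/-- The list of (entry, dual entry) pairs of a notched bitableau: the dual of the entry in
position `(i,j)` of `P` is the entry in position `(i, k_i+1−j)` of `Q` and vice versa. -/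
def entryDual (B : Bitab) : List (ℕ × ℕ) :=
  ((B.P.zip B.Q).map (fun pq => pq.1.zip pq.2.reverse)).flatten ++
  ((B.P.zip B.Q).map (fun pq => pq.2.zip pq.1.reverse)).flatten

/-- A skew-symmetric notched bitableau: semistandard, of even size, satisfying the
duality property. -/
def SkewSymm (B : Bitab) : Prop :=
  B.Semistandard ∧ (∀ r ∈ B.P, Even r.length) ∧ DualityProp B.entryDual

end Bitab

/-- The involution ι : reverse the order of the rows of `(Q, P)`. -/
def iota (B : Bitab) : Bitab := ⟨B.Q.reverse, B.P.reverse⟩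

/-! ### The OBRSK algorithm -/

/-- Insert `x` into the list `l` at (0-based) position `i`, shifting later entries right. -/
def insertAt (l : List ℕ) (i : ℕ) (x : ℕ) : List ℕ := l.take i ++ x :: l.drop i

/-- One row of bounded insertion: `x` bumps the smallest entry of the row that is `≥ x`
and `< b`; if there is no such entry, `x` is placed in a new box at the right end of the
entries `< b`.  Returns the new row, the bumped entry (if any), and the 1-indexed forward
position of the new/overwritten box. -/
def insertRowP (b x : ℕ) (row : List ℕ) : List ℕ × Option ℕ × ℕ :=
  match row.findIdx? (fun y => decide (x ≤ y ∧ y < b)) with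
  | some j => (row.set j x, some (row.getD j 0), j + 1)
  | none =>
      let j := (row.takeWhile (fun y => decide (y < b))).length
      (insertAt row j x, none, j + 1)

/-- Bounded insertion of `x` into the rows of `P`, bounded by `b`.  Returns the new rows
and the list of 1-indexed forward positions of the bumped/new boxes, row by row. -/
def insertP (b : ℕ) : List (List ℕ) → ℕ → List (List ℕ) × List ℕ
  | [], x => ([[x]], [1])
  | row :: rest, x =>
      match insertRowP b x row with
      | (row', none, j) => (row' :: rest, [j])
      | (row', some y, j) =>
          let (rest', js) := insertP b rest y
          (row' :: rest', j :: js)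

/-- Dual insertion of `x` into the rows of `Q`, at the backward positions recorded in `js`:
in each intermediate row the backward `j`-th entry is bumped, and in the final row the
incoming value is placed in a new box at the backward `j`-th position. -/
def insertQ : List (List ℕ) → List ℕ → ℕ → List (List ℕ)
  | rows, [], _ => rows
  | [], _ :: _, x => [[x]]
  | row :: rest, [j], x => insertAt row (row.length + 1 - j) x :: rest
  | row :: rest, j :: js, x =>
      row.set (row.length - j) x :: insertQ rest js (row.getD (row.length - j) 0)

/-- Modify the `k`-th (0-based) row of a list of rows. -/
def modifyRow (rows : List (List ℕ)) (k : ℕ) (f : List ℕ → List ℕ) : List (List ℕ) :=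
  rows.take k ++ (match rows.drop k with
    | [] => []
    | r :: rest => f r :: rest)

/-- One step of the OBRSK algorithm, applied with the quadruple
`(a_{i+1}, b_{i+1}, c_{t−i}, d_{t−i})`. -/
def obrskStep (PQ : List (List ℕ) × List (List ℕ)) (q : ℕ × ℕ × ℕ × ℕ) :
    List (List ℕ) × List (List ℕ) :=
  let (x, b, c, d) := q
  let Pjs := insertP b PQ.1 x
  let K := Pjs.2.length
  let Q' := insertQ PQ.2 Pjs.2 c
  (modifyRow Pjs.1 (K - 1) (fun r => r ++ [d]), modifyRow Q' (K - 1) (fun r => b :: r))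

/-- The list of quadruples `(a_{i+1}, b_{i+1}, c_{t−i}, d_{t−i})`, `i = 0, …, t−1`. -/
def ArrayPair.quads (π : ArrayPair) : List (ℕ × ℕ × ℕ × ℕ) :=
  π.a.zip (π.b.zip (π.c.reverse.zip π.d.reverse))

/-- The notched bitableau `(P^(i), Q^(i))` produced after `i` steps of the OBRSK algorithm. -/
def stepState (π : ArrayPair) (i : ℕ) : List (List ℕ) × List (List ℕ) :=
  (π.quads.take i).foldl obrskStep ([], [])

/-- The OBRSK correspondence on pairs of negative skew-symmetric lexicographic arrays:
`OBRSK {π1, π2} := (P^(t), Q^(t))`. -/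
def OBRSKneg (π : ArrayPair) : Bitab :=
  ⟨(stepState π π.t).1, (stepState π π.t).2⟩

/-- The OBRSK correspondence on pairs of positive skew-symmetric lexicographic arrays. -/
def OBRSKpos (π : ArrayPair) : Bitab := iota (OBRSKneg (Lmap π))

/-- The OBRSK correspondence on pairs of nonvanishing skew-symmetric lexicographic arrays:
the bitableau whose negative and positive parts are the OBRSK images of the negative and
positive parts of the pair. -/
def OBRSK (π : ArrayPair) : Bitab :=
  ⟨(OBRSKneg π.negPart).P ++ (OBRSKpos π.posPart).P,
   (OBRSKneg π.negPart).Q ++ (OBRSKpos π.posPart).Q⟩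

/-! ### The reverse step -/

/-- One row of reverse bounded insertion: the incoming entry `x` bumps the largest entry
of the row smaller than `x`.  Returns the new row, the bumped-out entry, and the 1-indexed
forward position of the bumped box. -/
def revBumpRow (x : ℕ) (row : List ℕ) : List ℕ × ℕ × ℕ :=
  let k := (row.filter (fun y => decide (y < x))).length
  (row.set (k - 1) x, row.getD (k - 1) 0, k)

/-- Reverse bounded insertion upward through the given rows (listed bottom-to-top);
returns the new rows, the ejected entry, and the positions of the bumped boxes. -/
def revInsertUp : List (List ℕ) → ℕ → List (List ℕ) × ℕ × List ℕ
  | [], x => ([], x, [])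
  | row :: rest, x =>
      let rj := revBumpRow x row
      let rec' := revInsertUp rest rj.2.1
      (rj.1 :: rec'.1, rec'.2.1, rj.2.2 :: rec'.2.2)

/-- Dual reverse insertion upward through the given rows of `Q` (listed bottom-to-top),
along the dual (backward) positions `js`; returns the new rows and the ejected entry. -/
def revInsertUpQ : List (List ℕ) → List ℕ → ℕ → List (List ℕ) × ℕ
  | rows, [], x => (rows, x)
  | [], _ :: _, x => ([], x)
  | row :: rest, j :: js, x =>
      let idx := row.length - j
      let rec' := revInsertUpQ rest js (row.getD idx 0)
      (row.set idx x :: rec'.1, rec'.2)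

/-- One reverse step of OBRSK: produces `(P', Q')` and the integers `a, b, c, d`. -/
def reverseStep (B : Bitab) : Bitab × ℕ × ℕ × ℕ × ℕ :=
  let b := (B.Q.flatten.min?).getD 0
  let s := B.Q.length - 1 - B.Q.reverse.findIdx (fun r => r.contains b)
  let d := ((B.P.getD s []).getLast?).getD 0
  let P1 := modifyRow B.P s List.dropLast
  let Q1 := modifyRow B.Q s List.tail
  let rowS := P1.getD s []
  let k0 := (rowS.filter (fun y => decide (y < b))).length
  let x := rowS.getD (k0 - 1) 0
  let rowS' := rowS.eraseIdx (k0 - 1)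
  let up := revInsertUp (P1.take s).reverse x
  let P' := up.1.reverse ++ rowS' :: P1.drop (s + 1)
  let rowQ := Q1.getD s []
  let vQ := rowQ.getD (rowQ.length - k0) 0
  let rowQ' := rowQ.eraseIdx (rowQ.length - k0)
  let upQ := revInsertUpQ (Q1.take s).reverse up.2.2 vQ
  let Q' := upQ.1.reverse ++ rowQ' :: Q1.drop (s + 1)
  (⟨P'.filter (fun r => decide (r ≠ [])), Q'.filter (fun r => decide (r ≠ []))⟩,
    up.2.1, b, upQ.2, d)

/-! ### Multisets on ℕ², chains, boundedness -/

/-- The order on multisets on ℕ² : `msLE S T` means `S ≤ T`, i.e.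
`S₍₁₎ − S₍₂₎ ≤ T₍₁₎ − T₍₂₎`. -/
def msLE (S T : Multiset (ℕ × ℕ)) : Prop :=
  ∀ z : ℕ,
    ((T.filter (fun p => p.1 ≤ z)).card : ℤ) - ((T.filter (fun p => p.2 ≤ z)).card : ℤ) ≤
    ((S.filter (fun p => p.1 ≤ z)).card : ℤ) - ((S.filter (fun p => p.2 ≤ z)).card : ℤ)

namespace Bitab

/-- `(P,Q)^up` : the multiset of pairs formed by the top rows. -/
def up (B : Bitab) : Multiset (ℕ × ℕ) := ↑((B.P.getD 0 []).zip (B.Q.getD 0 []))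

/-- `(P,Q)^down` : the multiset of pairs formed by the bottom rows. -/
def down (B : Bitab) : Multiset (ℕ × ℕ) :=
  ↑((B.P.getD (B.P.length - 1) []).zip (B.Q.getD (B.Q.length - 1) []))

end Bitab

/-- `σ` represents a dual pair of chains in ℕ² : `σ` is a pair of skew-symmetric
lexicographic arrays whose first array lists a chain (first coordinates strictly
increasing, second coordinates strictly decreasing along the columns). -/
def IsChainArr (σ : ArrayPair) : Prop :=
  σ.SkewSymmLex ∧ List.Chain' (· < ·) σ.a ∧ List.Chain' (· > ·) σ.b

/-- `σ` represents a dual pair of chains in the pair of skew-symmetric multisets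
represented by `π` : both chains are contained in the respective underlying sets, and for
each column of the chain array, the dual column within `π` of its leftmost occurrence
coincides with its dual column within `σ`. -/
def DualChainIn (π σ : ArrayPair) : Prop :=
  IsChainArr σ ∧
  (∀ x ∈ σ.a.zip σ.b, x ∈ π.a.zip π.b) ∧
  (∀ x ∈ σ.d.zip σ.c, x ∈ π.d.zip π.c) ∧
  (∀ i < σ.t,
    (π.c.getD (π.t - 1 - (π.b.zip π.a).findIdx (fun x => x == (σ.b.getD i 0, σ.a.getD i 0))) 0,
     π.d.getD (π.t - 1 - (π.b.zip π.a).findIdx (fun x => x == (σ.b.getD i 0, σ.a.getD i 0))) 0)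
      = (σ.c.getD (σ.t - 1 - i) 0, σ.d.getD (σ.t - 1 - i) 0))

/-- The pair represented by `π` is bounded below by `T` : for every dual pair of chains in
it, `T ≤ OBRSK(negative part of the chain pair)^up`. -/
def PairBoundedT (π : ArrayPair) (T : Finset (ℕ × ℕ)) : Prop :=
  ∀ σ : ArrayPair, DualChainIn π σ → msLE ↑T.val (OBRSK σ.negPart).up

/-- The pair represented by `π` is bounded above by `W` : for every dual pair of chains in
it, `OBRSK(positive part of the chain pair)^down ≤ W`. -/
def PairBoundedW (π : ArrayPair) (W : Finset (ℕ × ℕ)) : Prop :=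
  ∀ σ : ArrayPair, DualChainIn π σ → msLE (OBRSK σ.posPart).down ↑W.val

/-- The pair represented by `π` is bounded by `T, W`. -/
def PairBounded (π : ArrayPair) (T W : Finset (ℕ × ℕ)) : Prop :=
  PairBoundedT π T ∧ PairBoundedW π W

namespace Bitab

/-- The bitableau is bounded below by `T` : if its top row is negative (i.e. the negative
part is nonempty), then `T₍₁₎ − T₍₂₎ ≤ P₁⁻ − Q₁⁻`. -/
def BoundedByT (B : Bitab) (T : Finset (ℕ × ℕ)) : Prop :=
  diffLT (B.P.getD 0 []) (B.Q.getD 0 []) [] [] →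
    msLE ↑T.val ↑((B.P.getD 0 []).zip (B.Q.getD 0 []))

/-- The bitableau is bounded above by `W` : if its bottom row is positive (i.e. the
positive part is nonempty), then `P⁺_s − Q⁺_s ≤ W₍₁₎ − W₍₂₎`. -/
def BoundedByW (B : Bitab) (W : Finset (ℕ × ℕ)) : Prop :=
  diffLT [] [] (B.P.getD (B.P.length - 1) []) (B.Q.getD (B.Q.length - 1) []) →
    msLE ↑((B.P.getD (B.P.length - 1) []).zip (B.Q.getD (B.Q.length - 1) [])) ↑W.val

/-- The bitableau is bounded by `T, W`. -/
def BoundedBy (B : Bitab) (T W : Finset (ℕ × ℕ)) : Prop :=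
  B.BoundedByT T ∧ B.BoundedByW W

end Bitab

/-- A negative subset of ℕ². -/
def NegSubset (T : Finset (ℕ × ℕ)) : Prop := ∀ p ∈ T, p.1 < p.2

/-- A positive subset of ℕ². -/
def PosSubset (W : Finset (ℕ × ℕ)) : Prop := ∀ p ∈ W, p.2 < p.1

/-- The coordinate projections `T₍₁₎`, `T₍₂₎` have no repeated elements. -/
def ProjNodup (T : Finset (ℕ × ℕ)) : Prop :=
  (T.val.map Prod.fst).Nodup ∧ (T.val.map Prod.snd).Nodup

/-! ### The orthogonal Grassmannian combinatorics -/

/-- `Ĩ(d)` : the set of `d`-element subsets of `{1, …, 2d}` containing exactly one of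
`k, k* = 2d+1−k` for every `k`, with an even number of elements exceeding `d`. -/
def Itilde (d : ℕ) : Set (Finset ℕ) :=
  {v | v ⊆ Finset.Icc 1 (2 * d) ∧ v.card = d ∧
    (∀ k ∈ Finset.Icc 1 (2 * d), (k ∈ v ↔ (2 * d + 1 - k) ∉ v)) ∧
    Even ((v.filter (fun x => d < x)).card)}

/-- `OR(β) = {(r,c) : r ∈ β̄, c ∈ β, r < c*}`. -/
def ORset (d : ℕ) (β : Finset ℕ) : Set (ℕ × ℕ) :=
  {p | p.1 ∈ Finset.Icc 1 (2 * d) ∧ p.1 ∉ β ∧ p.2 ∈ β ∧ p.1 < 2 * d + 1 - p.2}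

/-- `U^# := {(c*, r*) : (r,c) ∈ U}` (with multiplicities). -/
def hashMS (d : ℕ) (U : Multiset (ℕ × ℕ)) : Multiset (ℕ × ℕ) :=
  U.map (fun p => (2 * d + 1 - p.2, 2 * d + 1 - p.1))

/-- `ψ(π)` is a pair of skew-symmetric multisets on `β̄×β`, i.e. of the form `{U, U^#}`
with `U` a multiset on `OR(β)`. -/
def ArrayPair.OnBB (d : ℕ) (β : Finset ℕ) (π : ArrayPair) : Prop :=
  (∀ x ∈ π.a.zip π.b, x ∈ ORset d β) ∧
  (↑(π.d.zip π.c) : Multiset (ℕ × ℕ)) = hashMS d ↑(π.a.zip π.b)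

/-- A skew-symmetric notched bitableau is on `β̄×β` : all entries of `P` are in `β̄`, all
entries of `Q` are in `β`, and every entry plus its dual equals `2d+1`. -/
def Bitab.OnBB (d : ℕ) (β : Finset ℕ) (B : Bitab) : Prop :=
  (∀ r ∈ B.P, ∀ x ∈ r, x ∈ Finset.Icc 1 (2 * d) ∧ x ∉ β) ∧
  (∀ r ∈ B.Q, ∀ x ∈ r, x ∈ β) ∧
  (∀ p ∈ B.entryDual, p.1 + p.2 = 2 * d + 1)

/-- The partial order on `Ĩ(d)` : `v ≤ w` iff the `i`-th smallest element of `v` is `≤`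
the `i`-th smallest element of `w` for every `i`. -/
def IleD (v w : Finset ℕ) : Prop :=
  v.card = w.card ∧
  ∀ i < v.card, (v.sort (· ≤ ·)).getD i 0 ≤ (w.sort (· ≤ ·)).getD i 0

def IltD (v w : Finset ℕ) : Prop := IleD v w ∧ v ≠ w

/-- `I_β(Skew-symm)` : pairs `(R, S)` with `R ⊆ β̄`, `S ⊆ β`, `|R| = |S|` even, and
`r_i + s_{2l+1−i} = 2d+1` for all `i`. -/
def IbSS (d : ℕ) (β : Finset ℕ) : Set (Finset ℕ × Finset ℕ) :=
  {RS | RS.1 ⊆ Finset.Icc 1 (2 * d) \ β ∧ RS.2 ⊆ β ∧ RS.1.card = RS.2.card ∧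
    Even RS.1.card ∧
    ∀ i < RS.1.card,
      (RS.1.sort (· ≤ ·)).getD i 0 + (RS.2.sort (· ≤ ·)).getD (RS.1.card - 1 - i) 0
        = 2 * d + 1}

/-- `θ_i := P_i ∪̇ (β ∖ Q_i)`. -/
def rowTheta (β : Finset ℕ) (p q : List ℕ) : Finset ℕ := p.toFinset ∪ (β \ q.toFinset)

/-- An extended `β`-chain, listed with strictly increasing rows and strictly decreasing
columns. -/
def IsExtChain (ch : List (ℕ × ℕ)) : Prop :=
  List.Chain' (fun x y => x.1 < y.1 ∧ y.2 < x.2) ch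

/-- The negative part `C⁻` of an extended chain: the elements `(r,c)` with `r < c`. -/
def chainNeg (ch : List (ℕ × ℕ)) : List (ℕ × ℕ) := ch.filter (fun p => decide (p.1 < p.2))

/-- The positive part `C⁺` of an extended chain: the elements `(r,c)` with `r > c`. -/
def chainPos (ch : List (ℕ × ℕ)) : List (ℕ × ℕ) := ch.filter (fun p => decide (p.2 < p.1))

/-- `ψ⁻¹({C, C^#})` : the pair of arrays corresponding to the dual pair of chains
`{C, C^#}` determined by an extended `β`-chain `C`. -/
def chainToPair (d : ℕ) (ch : List (ℕ × ℕ)) : ArrayPair :=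
  ⟨ch.map Prod.fst, ch.map Prod.snd,
   (ch.map (fun p => 2 * d + 1 - p.1)).reverse,
   (ch.map (fun p => 2 * d + 1 - p.2)).reverse⟩

/-- The terminating row number `K` of the bounded insertion performed at step `i`
(1-indexed) of the OBRSK algorithm. -/
def stepK (π : ArrayPair) (i : ℕ) : ℕ :=
  ((insertP (π.quads.getD (i - 1) (0, 0, 0, 0)).2.1 (stepState π (i - 1)).1
      (π.quads.getD (i - 1) (0, 0, 0, 0)).1).2).length

end OBRSKPaper

/-! ### Auxiliary development for stmt12 -/

namespace Stmt12Aux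
open OBRSKPaper

/-! #### getD-based list helpers -/

/-- Shorthand for `getD _ 0`. -/
def gE (l : List ℕ) (i : ℕ) : ℕ := l.getD i 0

lemma gE_eq_getElem {l : List ℕ} {i : ℕ} (h : i < l.length) : gE l i = l[i] := by
  simp [gE, List.getD_eq_getElem?_getD, List.getElem?_eq_getElem h]

lemma gE_eq_zero_of_le {l : List ℕ} {i : ℕ} (h : l.length ≤ i) : gE l i = 0 := by
  simp [gE, List.getD_eq_getElem?_getD, List.getElem?_eq_none h]

lemma gE_mem {l : List ℕ} {i : ℕ} (h : i < l.length) : gE l i ∈ l := by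
  rw [gE_eq_getElem h]; exact List.getElem_mem h

lemma mem_iff_gE {l : List ℕ} {x : ℕ} : x ∈ l ↔ ∃ i, i < l.length ∧ gE l i = x := by
  constructor
  · intro hx
    obtain ⟨i, hi, rfl⟩ := List.getElem_of_mem hx
    exact ⟨i, hi, gE_eq_getElem hi⟩
  · rintro ⟨i, hi, rfl⟩; exact gE_mem hi

lemma gE_set_self {l : List ℕ} {i : ℕ} (h : i < l.length) (a : ℕ) :
    gE (l.set i a) i = a := by
  rw [gE_eq_getElem (by simpa using h)]; simp

lemma gE_set_ne {l : List ℕ} {i j : ℕ} (h : i ≠ j) (a : ℕ) :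
    gE (l.set i a) j = gE l j := by
  by_cases hj : j < l.length
  · rw [gE_eq_getElem (by simpa using hj), gE_eq_getElem hj]
    exact List.getElem_set_ne h _
  · rw [gE_eq_zero_of_le (by simpa using Nat.le_of_not_lt hj),
      gE_eq_zero_of_le (Nat.le_of_not_lt hj)]

lemma gE_take {l : List ℕ} {m i : ℕ} (h : i < m) : gE (l.take m) i = gE l i := by
  by_cases hi : i < l.length
  · rw [gE_eq_getElem (by simp [hi, h]), gE_eq_getElem hi]
    exact List.getElem_take
  · rw [gE_eq_zero_of_le (by simp [Nat.le_of_not_lt hi]),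
      gE_eq_zero_of_le (Nat.le_of_not_lt hi)]

lemma mem_take_iff_gE {l : List ℕ} {m : ℕ} {x : ℕ} :
    x ∈ l.take m ↔ ∃ i, i < m ∧ i < l.length ∧ gE l i = x := by
  rw [mem_iff_gE]
  constructor
  · rintro ⟨i, hi, rfl⟩
    simp only [List.length_take, lt_min_iff] at hi
    exact ⟨i, hi.1, hi.2, (gE_take hi.1).symm⟩
  · rintro ⟨i, h1, h2, rfl⟩
    exact ⟨i, by simp [h1, h2], gE_take h1⟩

/-! #### insertAt lemmas -/

lemma length_insertAt {l : List ℕ} {i : ℕ} (h : i ≤ l.length) (x : ℕ) :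
    (insertAt l i x).length = l.length + 1 := by
  simp [insertAt]; omega

lemma gE_insertAt_lt {l : List ℕ} {i j : ℕ} (hi : i ≤ l.length) (h : j < i) (x : ℕ) :
    gE (insertAt l i x) j = gE l j := by
  have h1 : j < (l.take i).length := by simp; omega
  have h2 : j < l.length := by omega
  rw [gE_eq_getElem (by rw [length_insertAt hi]; omega), gE_eq_getElem h2]
  simp only [insertAt]
  rw [List.getElem_append_left h1]
  exact List.getElem_take

lemma gE_insertAt_self {l : List ℕ} {i : ℕ} (hi : i ≤ l.length) (x : ℕ) :
    gE (insertAt l i x) i = x := by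
  have h1 : (l.take i).length = i := by simp; omega
  rw [gE_eq_getElem (by rw [length_insertAt hi]; omega)]
  simp only [insertAt]
  rw [List.getElem_append_right (by omega)]
  simp [h1]

lemma gE_insertAt_gt {l : List ℕ} {i j : ℕ} (hi : i ≤ l.length) (h : i < j) (x : ℕ) :
    gE (insertAt l i x) j = gE l (j - 1) := by
  have h1 : (l.take i).length = i := by simp; omega
  simp only [gE, List.getD_eq_getElem?_getD, insertAt]
  rw [List.getElem?_append_right (by omega)]
  have h3 : j - (l.take i).length = (j - i - 1) + 1 := by omega
  rw [h3, List.getElem?_cons_succ, List.getElem?_drop]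
  congr 2
  omega

lemma take_insertAt_of_le {l : List ℕ} {i m : ℕ} (hi : i ≤ l.length) (h : m ≤ i) (x : ℕ) :
    (insertAt l i x).take m = l.take m := by
  simp only [insertAt]
  rw [List.take_append_of_le_length (by simp; omega)]
  rw [List.take_take, min_eq_left h]

lemma mem_insertAt {l : List ℕ} {i : ℕ} {x y : ℕ} :
    y ∈ insertAt l i x ↔ y = x ∨ y ∈ l := by
  rw [insertAt]
  constructor
  · intro h
    rcases List.mem_append.1 h with h | h
    · exact Or.inr (List.mem_of_mem_take h)
    · rcases List.mem_cons.1 h with h | h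
      · exact Or.inl h
      · exact Or.inr (List.mem_of_mem_drop h)
  · intro h
    rcases h with rfl | h
    · exact List.mem_append.2 (Or.inr (List.mem_cons_self))
    · rcases List.mem_append.1 ((List.take_append_drop i l).symm ▸ h) with h | h
      · exact List.mem_append.2 (Or.inl h)
      · exact List.mem_append.2 (Or.inr (List.mem_cons_of_mem _ h))

/-! #### gE of append -/

lemma gE_append_left {l l' : List ℕ} {i : ℕ} (h : i < l.length) :
    gE (l ++ l') i = gE l i := by
  rw [gE_eq_getElem (by simp; omega), gE_eq_getElem h, List.getElem_append_left h]

lemma gE_append_singleton_self {l : List ℕ} {x : ℕ} :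
    gE (l ++ [x]) l.length = x := by
  rw [gE_eq_getElem (by simp)]
  rw [List.getElem_append_right (le_refl _)]
  simp

end Stmt12Aux

open OBRSKPaper


/-! #### The abstract top-row automaton and its bridge to OBRSK -/

namespace Stmt12Aux
open OBRSKPaper

abbrev Quad : Type := ℕ × ℕ × ℕ × ℕ

def qA (q : Quad) : ℕ := q.1
def qB (q : Quad) : ℕ := q.2.1
def qC (q : Quad) : ℕ := q.2.2.1
def qD (q : Quad) : ℕ := q.2.2.2

def predQ (q : Quad) : ℕ → Bool := fun y => decide (qA q ≤ y ∧ y < qB q)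

def wB (R : List ℕ) (q : Quad) : ℕ := (R.takeWhile (fun y => decide (y < qB q))).length

def stepRQ (s : List ℕ × List ℕ) (q : Quad) : List ℕ × List ℕ :=
  match s.1.findIdx? (predQ q) with
  | some i => (s.1.set i (qA q), s.2.set (s.2.length - (i + 1)) (qC q))
  | none => (insertAt s.1 (wB s.1 q) (qA q) ++ [qD q],
      qB q :: insertAt s.2 (s.2.length - wB s.1 q) (qC q))

def runS (L : List Quad) : List ℕ × List ℕ := L.foldl stepRQ ([], [])

lemma runS_append (L : List Quad) (q : Quad) :
    runS (L ++ [q]) = stepRQ (runS L) q := by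
  simp [runS, List.foldl_append]

lemma modifyRow_succ_cons (r : List ℕ) (rs : List (List ℕ)) (k : ℕ)
    (f : List ℕ → List ℕ) : modifyRow (r :: rs) (k + 1) f = r :: modifyRow rs k f := by
  simp [modifyRow]

lemma insertP_snd_cons (b : ℕ) (rows : List (List ℕ)) (x : ℕ) :
    ∃ j js, (insertP b rows x).2 = j :: js := by
  induction rows generalizing x with
  | nil => exact ⟨1, [], rfl⟩
  | cons row rest ih =>
    rw [insertP]
    rcases h : insertRowP b x row with ⟨row', oy, j⟩
    cases oy with
    | none => exact ⟨j, [], rfl⟩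
    | some y =>
      simp only
      obtain ⟨j2, js2, h2⟩ := ih y
      exact ⟨j, (insertP b rest y).2, rfl⟩

lemma bridge_step (P Q : List (List ℕ)) (hne : P = [] ↔ Q = []) (q : Quad) :
    (obrskStep (P, Q) q).1.getD 0 [] = (stepRQ (P.getD 0 [], Q.getD 0 []) q).1 ∧
    (obrskStep (P, Q) q).2.getD 0 [] = (stepRQ (P.getD 0 [], Q.getD 0 []) q).2 ∧
    (obrskStep (P, Q) q).1 ≠ [] ∧ (obrskStep (P, Q) q).2 ≠ [] := by
  obtain ⟨a, b, c, d⟩ := q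
  cases P with
  | nil =>
    have hQ : Q = [] := hne.1 rfl
    subst hQ
    refine ⟨rfl, rfl, by simp [obrskStep, insertP, insertQ, modifyRow],
      by simp [obrskStep, insertP, insertQ, modifyRow]⟩
  | cons row rest =>
    have hQ : Q ≠ [] := fun h => (List.cons_ne_nil _ _) (hne.2 h)
    cases Q with
    | nil => exact absurd rfl hQ
    | cons qr qrest =>
      rcases hfi : row.findIdx? (predQ (a, b, c, d)) with _ | i
      · -- insertion case
        set w := (row.takeWhile (fun y => decide (y < b))).length with hw
        have hir : insertRowP b a row = (insertAt row w a, none, w + 1) := by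
          rw [insertRowP]
          rw [show (row.findIdx? fun y => decide (a ≤ y ∧ y < b)) = none from hfi]
        have hip : insertP b (row :: rest) a = ((insertAt row w a) :: rest, [w + 1]) := by
          rw [insertP, hir]
        have hL : obrskStep (row :: rest, qr :: qrest) (a, b, c, d) =
            ((insertAt row w a ++ [d]) :: rest,
             (b :: insertAt qr (qr.length + 1 - (w + 1)) c) :: qrest) := by
          show (modifyRow (insertP b (row :: rest) a).1 ((insertP b (row :: rest) a).2.length - 1)
                  (fun r => r ++ [d]),
                modifyRow (insertQ (qr :: qrest) (insertP b (row :: rest) a).2 c)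
                  ((insertP b (row :: rest) a).2.length - 1) (fun r => b :: r)) = _
          rw [hip]
          simp only [List.length_cons, List.length_nil, Nat.zero_add, Nat.sub_self]
          rw [insertQ]
          rfl
        have hR : stepRQ ((row :: rest).getD 0 [], (qr :: qrest).getD 0 []) (a, b, c, d) =
            (insertAt row w a ++ [d], b :: insertAt qr (qr.length - w) c) := by
          show stepRQ (row, qr) (a, b, c, d) = _
          rw [stepRQ]
          rw [show (row.findIdx? (predQ (a, b, c, d))) = none from hfi]
          rfl
        rw [hL, hR]
        have hww : qr.length + 1 - (w + 1) = qr.length - w := by omega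
        rw [hww]
        exact ⟨rfl, rfl, by simp, by simp⟩
      · -- bump case
        have hir : insertRowP b a row = (row.set i a, some (row.getD i 0), i + 1) := by
          rw [insertRowP]
          rw [show (row.findIdx? fun y => decide (a ≤ y ∧ y < b)) = some i from hfi]
        obtain ⟨j2, js2, hjs⟩ := insertP_snd_cons b rest (row.getD i 0)
        have hip : insertP b (row :: rest) a =
            (row.set i a :: (insertP b rest (row.getD i 0)).1,
              (i + 1) :: (insertP b rest (row.getD i 0)).2) := by
          rw [insertP, hir]
        have hL1 : (obrskStep (row :: rest, qr :: qrest) (a, b, c, d)).1.getD 0 [] = row.set i a := by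
          show (modifyRow (insertP b (row :: rest) a).1 ((insertP b (row :: rest) a).2.length - 1)
                  (fun r => r ++ [d])).getD 0 [] = _
          rw [hip, hjs]
          simp only [List.length_cons]
          rw [show js2.length + 1 + 1 - 1 = js2.length + 1 from by omega]
          rw [modifyRow_succ_cons]
          rfl
        have hL2 : (obrskStep (row :: rest, qr :: qrest) (a, b, c, d)).2.getD 0 [] =
            qr.set (qr.length - (i + 1)) c := by
          show (modifyRow (insertQ (qr :: qrest) (insertP b (row :: rest) a).2 c)
                  ((insertP b (row :: rest) a).2.length - 1) (fun r => b :: r)).getD 0 [] = _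
          rw [hip, hjs]
          simp only [List.length_cons]
          rw [show js2.length + 1 + 1 - 1 = js2.length + 1 from by omega]
          rw [insertQ]
          · rw [modifyRow_succ_cons]; rfl
          · simp
        have hR : stepRQ ((row :: rest).getD 0 [], (qr :: qrest).getD 0 []) (a, b, c, d) =
            (row.set i a, qr.set (qr.length - (i + 1)) c) := by
          show stepRQ (row, qr) (a, b, c, d) = _
          rw [stepRQ]
          rw [show (row.findIdx? (predQ (a, b, c, d))) = some i from hfi]
          rfl
        refine ⟨by rw [hL1, hR], by rw [hL2, hR], ?_, ?_⟩
        · show (modifyRow (insertP b (row :: rest) a).1 _ _) ≠ []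
          rw [hip, hjs]
          simp only [List.length_cons]
          rw [show js2.length + 1 + 1 - 1 = js2.length + 1 from by omega]
          rw [modifyRow_succ_cons]
          simp
        · show (modifyRow (insertQ (qr :: qrest) (insertP b (row :: rest) a).2 c) _ _) ≠ []
          rw [hip, hjs]
          simp only [List.length_cons]
          rw [show js2.length + 1 + 1 - 1 = js2.length + 1 from by omega]
          rw [insertQ]
          · rw [modifyRow_succ_cons]; simp
          · simp

lemma bridge_fold (L : List Quad) : ∀ (P Q : List (List ℕ)), (P = [] ↔ Q = []) →
    ((L.foldl obrskStep (P, Q)).1.getD 0 [] = (L.foldl stepRQ (P.getD 0 [], Q.getD 0 [])).1 ∧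
     (L.foldl obrskStep (P, Q)).2.getD 0 [] = (L.foldl stepRQ (P.getD 0 [], Q.getD 0 [])).2) := by
  induction L with
  | nil => intro P Q h; exact ⟨rfl, rfl⟩
  | cons q L ih =>
    intro P Q h
    obtain ⟨h1, h2, h3, h4⟩ := bridge_step P Q h q
    have heq : obrskStep (P, Q) q = ((obrskStep (P, Q) q).1, (obrskStep (P, Q) q).2) := rfl
    have := ih (obrskStep (P, Q) q).1 (obrskStep (P, Q) q).2 (by simp [h3, h4])
    simp only [List.foldl_cons]
    rw [heq]
    rw [this.1, this.2] at *
    constructor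
    · rw [h1, h2]
    · rw [h1, h2]

lemma OBRSKneg_P_head (π' : ArrayPair) :
    (OBRSKneg π').P.getD 0 [] = (runS (π'.quads.take π'.t)).1 := by
  have := (bridge_fold (π'.quads.take π'.t) [] [] (by simp)).1
  exact this

lemma OBRSKneg_Q_head (π' : ArrayPair) :
    (OBRSKneg π').Q.getD 0 [] = (runS (π'.quads.take π'.t)).2 := by
  have := (bridge_fold (π'.quads.take π'.t) [] [] (by simp)).2
  exact this

end Stmt12Aux


/-! #### Hypotheses on quad lists and invariants of the run -/

namespace Stmt12Aux
open OBRSKPaper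

def okQ (q : Quad) : Prop :=
  0 < qA q ∧ qA q < qB q ∧ qA q < qD q ∧ qB q < qC q ∧ qD q < qC q

def lexR (p q : Quad) : Prop := qB q ≤ qB p ∧ (qB q = qB p → qA q ≤ qA p)

def pairsOf (L : List Quad) : List (ℕ × ℕ) :=
  L.flatMap fun q => [(qA q, qC q), (qB q, qD q), (qC q, qA q), (qD q, qB q)]

def Hyp (L : List Quad) : Prop :=
  (∀ q ∈ L, okQ q) ∧ L.Pairwise lexR ∧ DualityProp (pairsOf L)

lemma pairsOf_subset {M L : List Quad} (h : M ⊆ L) : pairsOf M ⊆ pairsOf L := by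
  intro p hp
  rw [pairsOf, List.mem_flatMap] at hp ⊢
  obtain ⟨q, hq, hmem⟩ := hp
  exact ⟨q, h hq, hmem⟩

lemma dualityProp_mono {l l' : List (ℕ × ℕ)} (h : DualityProp l) (hs : l' ⊆ l) :
    DualityProp l' := fun p hp q hq => h p (hs hp) q (hs hq)

lemma Hyp.sublist {L M : List Quad} (h : Hyp L) (hs : M.Sublist L) : Hyp M :=
  ⟨fun q hq => h.1 q (hs.subset hq), h.2.1.sublist hs,
    dualityProp_mono h.2.2 (pairsOf_subset hs.subset)⟩

lemma mem_pairsOf_ac {L : List Quad} {q : Quad} (h : q ∈ L) : (qA q, qC q) ∈ pairsOf L := by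
  rw [pairsOf, List.mem_flatMap]; exact ⟨q, h, by simp⟩

lemma mem_pairsOf_bd {L : List Quad} {q : Quad} (h : q ∈ L) : (qB q, qD q) ∈ pairsOf L := by
  rw [pairsOf, List.mem_flatMap]; exact ⟨q, h, by simp⟩

lemma mem_pairsOf_ca {L : List Quad} {q : Quad} (h : q ∈ L) : (qC q, qA q) ∈ pairsOf L := by
  rw [pairsOf, List.mem_flatMap]; exact ⟨q, h, by simp⟩

lemma mem_pairsOf_db {L : List Quad} {q : Quad} (h : q ∈ L) : (qD q, qB q) ∈ pairsOf L := by
  rw [pairsOf, List.mem_flatMap]; exact ⟨q, h, by simp⟩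

/-- If `qB q ≤ qB r` then `qD r ≤ qD q`. -/
lemma dual_D_le {L : List Quad} (h : Hyp L) {q r : Quad} (hq : q ∈ L) (hr : r ∈ L)
    (hb : qB q ≤ qB r) : qD r ≤ qD q :=
  (h.2.2 (qB q, qD q) (mem_pairsOf_bd hq) (qB r, qD r) (mem_pairsOf_bd hr)).1 hb

/-- If `qB q < qB r` then `qD r < qD q`. -/
lemma dual_D_lt {L : List Quad} (h : Hyp L) {q r : Quad} (hq : q ∈ L) (hr : r ∈ L)
    (hb : qB q < qB r) : qD r < qD q :=
  (h.2.2 (qB q, qD q) (mem_pairsOf_bd hq) (qB r, qD r) (mem_pairsOf_bd hr)).2.1 hb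

/-- If `qB q ≤ qB r` then `qA r < qD q`. -/
lemma dual_A_lt_D {L : List Quad} (h : Hyp L) {q r : Quad} (hq : q ∈ L) (hr : r ∈ L)
    (hb : qB q ≤ qB r) : qA r < qD q := by
  by_contra hcon
  push_neg at hcon
  have h1 : qC r ≤ qB q :=
    (h.2.2 (qD q, qB q) (mem_pairsOf_db hq) (qA r, qC r) (mem_pairsOf_ac hr)).1 hcon
  have h2 : qB r < qC r := (h.1 r hr).2.2.2.1
  omega

/-! #### Boolean predicate helpers -/

lemma predQ_iff (q : Quad) (e : ℕ) : predQ q e = true ↔ qA q ≤ e ∧ e < qB q := by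
  simp [predQ]

lemma findIdx?_some_spec {R : List ℕ} {p : ℕ → Bool} {i : ℕ} (h : R.findIdx? p = some i) :
    i < R.length ∧ p (gE R i) = true ∧ ∀ j, j < i → ¬ p (gE R j) = true := by
  rw [List.findIdx?_eq_some_iff_getElem] at h
  obtain ⟨hlen, hp, hj⟩ := h
  refine ⟨hlen, by rwa [gE_eq_getElem hlen], fun j hji => ?_⟩
  rw [gE_eq_getElem (lt_trans hji hlen)]
  simpa using hj j hji

lemma findIdx?_none_spec {R : List ℕ} {p : ℕ → Bool} (h : R.findIdx? p = none) :
    ∀ e ∈ R, ¬ p e = true := by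
  rw [List.findIdx?_eq_none_iff] at h
  intro e he
  simp [h e he]

lemma takeWhile_length_le (p : ℕ → Bool) (l : List ℕ) : (l.takeWhile p).length ≤ l.length :=
  (l.takeWhile_sublist p).length_le

lemma pred_of_lt_takeWhile {p : ℕ → Bool} {l : List ℕ} {j : ℕ}
    (hj : j < (l.takeWhile p).length) : p (gE l j) = true := by
  have hp : l.takeWhile p <+: l := l.takeWhile_prefix p
  have h1 : gE l j = (l.takeWhile p)[j] := by
    rw [gE_eq_getElem (lt_of_lt_of_le hj hp.length_le), hp.getElem hj]
  rw [h1]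
  exact List.mem_takeWhile_imp (List.getElem_mem hj)

lemma not_pred_at_takeWhile {p : ℕ → Bool} : ∀ {l : List ℕ},
    (l.takeWhile p).length < l.length → ¬ p (gE l (l.takeWhile p).length) = true := by
  intro l
  induction l with
  | nil => simp
  | cons x xs ih =>
    intro hlt
    cases hpx : p x with
    | false =>
      rw [List.takeWhile_cons_of_neg (by simp [hpx])]
      simpa [gE] using hpx
    | true =>
      rw [List.takeWhile_cons_of_pos (by simp [hpx])] at hlt ⊢
      simp only [List.length_cons]
      have hg : gE (x :: xs) ((xs.takeWhile p).length + 1) = gE xs ((xs.takeWhile p).length) := by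
        simp [gE]
      rw [hg]
      exact ih (by simpa using hlt)

lemma wB_le (R : List ℕ) (q : Quad) : wB R q ≤ R.length := takeWhile_length_le _ _

/-! #### Invariants of the run -/

structure Inv (L : List Quad) (s : List ℕ × List ℕ) : Prop where
  mono : ∀ i j, i ≤ j → j < s.1.length → gE s.1 i ≤ gE s.1 j
  memP : ∀ e ∈ s.1, ∃ r ∈ L, e = qA r ∨ e = qD r
  memQ : ∀ e ∈ s.2, ∃ r ∈ L, e = qB r ∨ e = qC r
  len : s.2.length = s.1.length
  evenP : Even s.1.length
  ne : L ≠ [] → s.1 ≠ []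

lemma entries_le_qD {L : List Quad} {q : Quad} (h : Hyp (L ++ [q]))
    {s : List ℕ × List ℕ} (inv : Inv L s) : ∀ e ∈ s.1, e ≤ qD q := by
  intro e he
  obtain ⟨r, hr, hor⟩ := inv.memP e he
  have hqL : q ∈ L ++ [q] := by simp
  have hrL : r ∈ L ++ [q] := by simp [hr]
  have hb : qB q ≤ qB r := by
    have := (List.pairwise_append.1 h.2.1).2.2 r hr q (by simp)
    exact this.1
  rcases hor with rfl | rfl
  · exact le_of_lt (dual_A_lt_D h hqL hrL hb)
  · exact dual_D_le h hqL hrL hb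

lemma q1_entries_ge {L : List Quad} {q : Quad} (h : Hyp (L ++ [q]))
    {s : List ℕ × List ℕ} (inv : Inv L s) : ∀ e ∈ s.2, qB q ≤ e := by
  intro e he
  obtain ⟨r, hr, hor⟩ := inv.memQ e he
  have hb : qB q ≤ qB r := ((List.pairwise_append.1 h.2.1).2.2 r hr q (by simp)).1
  have hrok : okQ r := h.1 r (by simp [hr])
  rcases hor with rfl | rfl
  · exact hb
  · exact le_of_lt (lt_of_le_of_lt hb hrok.2.2.2.1)

lemma inv_nil : Inv [] ([], []) :=
  ⟨fun i j _ hj => by simp at hj, by simp, by simp, rfl, by simp, fun h => absurd rfl h⟩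

lemma inv_step {L : List Quad} {q : Quad} (h : Hyp (L ++ [q]))
    {s : List ℕ × List ℕ} (inv : Inv L s) : Inv (L ++ [q]) (stepRQ s q) := by
  have hok : okQ q := h.1 q (by simp)
  rcases hfi : s.1.findIdx? (predQ q) with _ | i
  · -- insertion case
    set w := (s.1.takeWhile (fun y => decide (y < qB q))).length with hw
    have hstep : stepRQ s q = (insertAt s.1 w (qA q) ++ [qD q],
        qB q :: insertAt s.2 (s.2.length - w) (qC q)) := by
      rw [stepRQ, hfi, wB, ← hw]
    have hwle : w ≤ s.1.length := by rw [hw]; exact takeWhile_length_le _ _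
    have hnone := findIdx?_none_spec hfi
    have hlen1 : (insertAt s.1 w (qA q)).length = s.1.length + 1 := length_insertAt hwle _
    have hlenR : (insertAt s.1 w (qA q) ++ [qD q]).length = s.1.length + 2 := by
      simp [hlen1]
    -- value description of the new row
    have hval : ∀ j, j < s.1.length + 2 →
        gE (insertAt s.1 w (qA q) ++ [qD q]) j =
          if j < w then gE s.1 j else if j = w then qA q
          else if j ≤ s.1.length then gE s.1 (j - 1) else qD q := by
      intro j hj
      rcases lt_trichotomy j w with hc | hc | hc
      · rw [if_pos hc, gE_append_left (by omega), gE_insertAt_lt hwle hc]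
      · subst hc
        rw [if_neg (by omega), if_pos rfl, gE_append_left (by omega), gE_insertAt_self hwle]
      · rw [if_neg (by omega), if_neg (by omega)]
        by_cases hj2 : j ≤ s.1.length
        · rw [if_pos hj2, gE_append_left (by omega), gE_insertAt_gt hwle hc]
        · rw [if_neg hj2]
          have hjj : j = s.1.length + 1 := by omega
          rw [hjj, ← hlen1, gE_append_singleton_self]
    -- entries below w are < qA q ; entries from w on are ≥ qB q
    have hlow : ∀ j, j < w → gE s.1 j < qA q := by
      intro j hj
      have h1 : gE s.1 j < qB q := by
        have := pred_of_lt_takeWhile (p := fun y => decide (y < qB q)) (l := s.1) (j := j)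
          (by omega)
        simpa using this
      have h2 := hnone (gE s.1 j) (gE_mem (by omega))
      rw [predQ_iff] at h2
      omega
    have hhigh : ∀ j, w ≤ j → j < s.1.length → qB q ≤ gE s.1 j := by
      intro j hjw hj
      have h1 : ¬ gE s.1 w < qB q := by
        have := not_pred_at_takeWhile (p := fun y => decide (y < qB q)) (l := s.1)
          (lt_of_lt_of_le (by omega) (le_refl s.1.length))
        rw [← hw] at this
        simpa using this
      exact le_trans (by omega) (inv.mono w j hjw hj)
    have hled : ∀ e ∈ s.1, e ≤ qD q := entries_le_qD h inv
    rw [hstep]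
    constructor
    · -- mono
      intro i j hij hj
      simp only at hj ⊢
      rw [hlenR] at hj
      rw [hval i (by omega), hval j hj]
      have hAB : qA q < qB q := hok.2.1
      have hAD : qA q < qD q := hok.2.2.1
      split_ifs with h1 h2 h3 h4 h5 h6 h7 h8 h9 h10 h11 h12 h13 h14 h15 <;>
        first
          | omega
          | (exact inv.mono i j hij (by omega))
          | (exact le_of_lt (hlow i h1))
          | (exact le_of_lt (lt_of_lt_of_le (hlow i h1) (le_trans (le_of_lt hAB) (hhigh (j-1) (by omega) (by omega)))))
          | (exact le_of_lt (lt_of_lt_of_le hAB (hhigh (j-1) (by omega) (by omega))))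
          | (exact hled _ (gE_mem (by omega)))
          | (exact le_of_lt (lt_of_lt_of_le (hlow i h1) (le_of_lt hAD)))
          | (exact le_of_lt hAD)
          | (exact inv.mono (i-1) (j-1) (by omega) (by omega))
    · -- memP
      intro e he
      simp only at he
      rcases List.mem_append.1 he with he | he
      · rcases mem_insertAt.1 he with rfl | he
        · exact ⟨q, by simp, Or.inl rfl⟩
        · obtain ⟨r, hr, hor⟩ := inv.memP e he
          exact ⟨r, by simp [hr], hor⟩
      · rcases List.mem_singleton.1 he with rfl
        exact ⟨q, by simp, Or.inr rfl⟩
    · -- memQ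
      intro e he
      simp only at he
      rcases List.mem_cons.1 he with rfl | he
      · exact ⟨q, by simp, Or.inl rfl⟩
      · rcases mem_insertAt.1 he with rfl | he
        · exact ⟨q, by simp, Or.inr rfl⟩
        · obtain ⟨r, hr, hor⟩ := inv.memQ e he
          exact ⟨r, by simp [hr], hor⟩
    · -- len
      have h2 := inv.len
      simp only [List.length_cons, hlenR]
      rw [length_insertAt (Nat.sub_le _ _)]
      omega
    · -- even
      simp only [hlenR]
      obtain ⟨m, hm⟩ := inv.evenP
      exact ⟨m + 1, by omega⟩
    · -- ne
      intro _
      simp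
  · -- bump case
    have hstep : stepRQ s q = (s.1.set i (qA q), s.2.set (s.2.length - (i + 1)) (qC q)) := by
      rw [stepRQ, hfi]
    obtain ⟨hlen, hpi, hbelow⟩ := findIdx?_some_spec hfi
    rw [predQ_iff] at hpi
    have hlow : ∀ j, j < i → gE s.1 j < qA q := by
      intro j hj
      have h2 := hbelow j hj
      rw [predQ_iff] at h2
      have h3 : gE s.1 j ≤ gE s.1 i := inv.mono j i (le_of_lt hj) hlen
      omega
    rw [hstep]
    constructor
    · intro i' j' hij hj
      simp only [List.length_set] at hj ⊢
      rcases eq_or_ne i i' with rfl | hne1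
      · rw [gE_set_self hlen]
        rcases eq_or_ne i j' with rfl | hne2
        · rw [gE_set_self hlen]
        · rw [gE_set_ne hne2]
          exact le_trans hpi.1 (inv.mono i j' hij hj)
      · rw [gE_set_ne hne1]
        rcases eq_or_ne i j' with rfl | hne2
        · rw [gE_set_self hlen]
          have : i' < i := by omega
          exact le_of_lt (hlow i' this)
        · rw [gE_set_ne hne2]
          exact inv.mono i' j' hij hj
    · intro e he
      simp only at he
      rcases List.mem_or_eq_of_mem_set he with he | rfl
      · obtain ⟨r, hr, hor⟩ := inv.memP e he
        exact ⟨r, by simp [hr], hor⟩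
      · exact ⟨q, by simp, Or.inl rfl⟩
    · intro e he
      simp only at he
      rcases List.mem_or_eq_of_mem_set he with he | rfl
      · obtain ⟨r, hr, hor⟩ := inv.memQ e he
        exact ⟨r, by simp [hr], hor⟩
      · exact ⟨q, by simp, Or.inr rfl⟩
    · simp [inv.len]
    · simpa using inv.evenP
    · intro _
      simp only
      intro hcon
      rw [List.set_eq_nil_iff] at hcon
      rw [hcon] at hlen
      simp at hlen

lemma inv_runS {L : List Quad} (h : Hyp L) : Inv L (runS L) := by
  induction L using List.reverseRecOn with
  | nil => exact inv_nil
  | append_singleton L q ih =>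
    rw [runS_append]
    exact inv_step h (ih (h.sublist (by simp)))

end Stmt12Aux


/-! #### Helper lemmas for the main induction -/

namespace Stmt12Aux
open OBRSKPaper

def fP (L : List Quad) : List ℕ := (runS L).1

def q1 (L : List Quad) : ℕ := gE (runS L).2 0

def lastQd (M : List Quad) : Quad := M.getLast?.getD (0, 0, 0, 0)

lemma lastQd_concat (M : List Quad) (q : Quad) : lastQd (M ++ [q]) = q := by
  simp [lastQd]

lemma lastQd_mem {M : List Quad} (h : M ≠ []) : lastQd M ∈ M := by
  rw [lastQd, List.getLast?_eq_getLast h]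
  exact List.getLast_mem h

lemma fP_nil : fP [] = [] := rfl

lemma fP_append (L : List Quad) (q : Quad) : fP (L ++ [q]) = (stepRQ (runS L) q).1 := by
  rw [fP, runS_append]

lemma fP_singleton (q : Quad) : fP [q] = [qA q, qD q] := by
  have : fP ([] ++ [q]) = (stepRQ (runS []) q).1 := fP_append [] q
  simp only [List.nil_append] at this
  rw [this]
  rw [stepRQ]
  rw [show (runS []).1.findIdx? (predQ q) = none from rfl]
  rfl

lemma q1_append_none {L : List Quad} {q : Quad}
    (hfi : (runS L).1.findIdx? (predQ q) = none) : q1 (L ++ [q]) = qB q := by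
  rw [q1, runS_append, stepRQ, hfi]
  simp [gE]

lemma q1_append_some {L : List Quad} {q : Quad} {i : ℕ}
    (hfi : (runS L).1.findIdx? (predQ q) = some i) (hlt : i + 1 < (runS L).2.length) :
    q1 (L ++ [q]) = q1 L := by
  rw [q1, runS_append, stepRQ, hfi]
  simp only
  rw [q1, gE_set_ne (by omega)]

/-- `qB q` is a lower bound on `q1 L` when `q` comes after all of `L`. -/
lemma q1L_ge {L : List Quad} {q : Quad} (h : Hyp (L ++ [q])) (inv : Inv L (runS L))
    (hne : (runS L).1 ≠ []) : qB q ≤ q1 L := by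
  have hlen : 0 < (runS L).2.length := by
    rw [inv.len]
    exact List.length_pos_iff.mpr hne
  exact q1_entries_ge h inv _ (gE_mem hlen)

/-- Description of the new row in the insertion case. -/
lemma gE_insert_desc {R : List ℕ} {q : Quad} (hw : wB R q ≤ R.length) (j : ℕ) :
    gE (insertAt R (wB R q) (qA q) ++ [qD q]) j =
      if j < wB R q then gE R j
      else if j = wB R q then qA q
      else if j ≤ R.length then gE R (j - 1)
      else if j = R.length + 1 then qD q else 0 := by
  have hlen1 : (insertAt R (wB R q) (qA q)).length = R.length + 1 := length_insertAt hw _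
  rcases lt_trichotomy j (wB R q) with hc | hc | hc
  · rw [if_pos hc, gE_append_left (by omega), gE_insertAt_lt hw hc]
  · subst hc
    rw [if_neg (by omega), if_pos rfl, gE_append_left (by omega), gE_insertAt_self hw]
  · rw [if_neg (by omega), if_neg (by omega)]
    by_cases hj2 : j ≤ R.length
    · rw [if_pos hj2, gE_append_left (by omega), gE_insertAt_gt hw hc]
    · rw [if_neg hj2]
      by_cases hj3 : j = R.length + 1
      · rw [if_pos hj3, hj3, ← hlen1, gE_append_singleton_self]
      · rw [if_neg hj3, gE_eq_zero_of_le (by simp [hlen1]; omega)]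

lemma length_insert_case {R : List ℕ} {q : Quad} (hw : wB R q ≤ R.length) :
    (insertAt R (wB R q) (qA q) ++ [qD q]).length = R.length + 2 := by
  simp [length_insertAt hw]

lemma insert_low {R : List ℕ} {q : Quad} (hfi : R.findIdx? (predQ q) = none) {i : ℕ}
    (hi : i < wB R q) : gE R i < qA q := by
  have h1 : gE R i < qB q := by
    have := pred_of_lt_takeWhile (p := fun y => decide (y < qB q)) (l := R) (j := i)
      (by rw [wB] at hi; omega)
    simpa using this
  have h2 := findIdx?_none_spec hfi (gE R i) (gE_mem (lt_of_lt_of_le hi (wB_le R q)))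
  rw [predQ_iff] at h2
  omega

lemma insert_high {R : List ℕ} {q : Quad}
    (hmono : ∀ i j, i ≤ j → j < R.length → gE R i ≤ gE R j) {i : ℕ}
    (hw : wB R q ≤ i) (hi : i < R.length) : qB q ≤ gE R i := by
  have h1 : ¬ gE R (wB R q) < qB q := by
    have := not_pred_at_takeWhile (p := fun y => decide (y < qB q)) (l := R)
      (show (R.takeWhile fun y => decide (y < qB q)).length < R.length from
        lt_of_le_of_lt hw hi)
    simpa [wB] using this
  exact le_trans (by omega) (hmono (wB R q) i hw hi)

lemma takeWhile_length_ge {p : ℕ → Bool} {l : List ℕ} {m : ℕ} (hm : m ≤ l.length)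
    (h : ∀ i, i < m → p (gE l i) = true) : m ≤ (l.takeWhile p).length := by
  by_contra hcon
  push_neg at hcon
  have h1 := not_pred_at_takeWhile (p := p) (l := l) (by omega)
  exact h1 (h _ hcon)

/-- In a sorted list whose entries below `χ'` are `< qA q` and whose entries in
`[χ', len-1)` are `≥ qB q`, the first entry in `[qA q, qB q)` must be the last one. -/
lemma first_bad_last {S : List ℕ} {q : Quad} {χ' i1 : ℕ}
    (hlow : ∀ i, i < χ' → gE S i < qA q)
    (htail : ∀ i, χ' ≤ i → i + 1 < S.length → qB q ≤ gE S i)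
    (hfi : S.findIdx? (predQ q) = some i1) :
    i1 = S.length - 1 ∧ χ' + 1 ≤ S.length := by
  obtain ⟨hi1, hp, _⟩ := findIdx?_some_spec hfi
  rw [predQ_iff] at hp
  have h1 : ¬ i1 < χ' := fun hc => by have := hlow i1 hc; omega
  have h2 : ¬ i1 + 1 < S.length := fun hc => by
    have := htail i1 (by omega) hc; omega
  exact ⟨by omega, by omega⟩

lemma take_le_real {S : List ℕ}
    (hmono : ∀ i j, i ≤ j → j < S.length → gE S i ≤ gE S j) {χ x : ℕ}
    (hχ1 : 1 ≤ χ) (hχ2 : χ ≤ S.length) (hx : x ∈ S.take χ) : x ≤ gE S (χ - 1) := by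
  obtain ⟨i, hiχ, hilen, rfl⟩ := mem_take_iff_gE.1 hx
  exact hmono i (χ - 1) (by omega) (by omega)

def ChainQ (M : List Quad) : Prop := M.Pairwise (fun p r => qA p < qA r ∧ qB r < qB p)

lemma ChainQ.sublist {M N : List Quad} (h : ChainQ M) (hs : N.Sublist M) : ChainQ N :=
  List.Pairwise.sublist hs h

/-- In the run of a chain, every `qA`-value of the chain appears in the row. -/
lemma chain_amem {M : List Quad} (hc : ChainQ M) : ∀ p ∈ M, qA p ∈ fP M := by
  induction M using List.reverseRecOn with
  | nil => simp
  | append_singleton M q ih =>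
    intro p hp
    have hchain : ChainQ M := hc.sublist (by simp)
    have hprev : ∀ p' ∈ M, qA p' < qA q := by
      intro p' hp'
      exact ((List.pairwise_append.1 hc).2.2 p' hp' q (by simp)).1
    rw [fP_append]
    rcases hfi : (runS M).1.findIdx? (predQ q) with _ | i1
    · -- insertion
      rw [stepRQ, hfi]
      simp only
      rcases List.mem_append.1 hp with hp | hp
      · exact List.mem_append.2 (Or.inl (mem_insertAt.2 (Or.inr (ih hchain p hp))))
      · rw [List.mem_singleton.1 hp]
        exact List.mem_append.2 (Or.inl (mem_insertAt.2 (Or.inl rfl)))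
    · -- bump
      rw [stepRQ, hfi]
      simp only
      obtain ⟨hi1, hpi, _⟩ := findIdx?_some_spec hfi
      rw [predQ_iff] at hpi
      rcases List.mem_append.1 hp with hp | hp
      · have hmem := ih hchain p hp
        obtain ⟨i2, hi2, hgE⟩ := mem_iff_gE.1 hmem
        simp only [fP] at hi2 hgE
        have hne2 : i1 ≠ i2 := by
          intro hcon
          subst hcon
          have := hprev p hp
          omega
        rw [mem_iff_gE]
        exact ⟨i2, by simpa using hi2, by rw [gE_set_ne hne2]; exact hgE⟩
      · rw [List.mem_singleton.1 hp]
        rw [mem_iff_gE]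
        exact ⟨i1, by simpa using hi1, gE_set_self hi1 _⟩

/-! #### The witness structure -/

structure Wit (L : List Quad) (j v : ℕ) (M : List Quad) (χ : ℕ) : Prop where
  sub : M.Sublist L
  chain : ChainQ M
  nen : M ≠ []
  card : M.length ≤ j
  hχ1 : j ≤ χ
  hχ2 : χ ≤ (fP M).length
  real : gE (fP M) (χ - 1) = v
  amem : ∀ x ∈ M.map qA, x ∈ (fP M).take χ
  tail : ∀ i, χ ≤ i → i + 1 < (fP M).length → qB (lastQd M) ≤ gE (fP M) i
  lastp : qB (lastQd M) ≤ gE (fP M) ((fP M).length - 1)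
    ∨ gE (fP M) ((fP M).length - 1) = qA (lastQd M)
    ∨ ∃ τ r, M = τ ++ [r] ∧ (fP τ).findIdx? (predQ r) = none

lemma Wit.transfer {L L' : List Quad} {j v : ℕ} {M : List Quad} {χ : ℕ}
    (w : Wit L j v M χ) (h : L.Sublist L') : Wit L' j v M χ :=
  ⟨w.sub.trans h, w.chain, w.nen, w.card, w.hχ1, w.hχ2, w.real, w.amem, w.tail, w.lastp⟩

end Stmt12Aux


namespace Stmt12Aux
open OBRSKPaper

/-- The construction realizing the value `qA q` at a position `≥ j`. -/
lemma realize_low {L : List Quad} {q : Quad} (h : Hyp (L ++ [q])) (j : ℕ)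
    (IH : ∀ j', 1 ≤ j' → j' ≤ (fP L).length → gE (fP L) (j' - 1) < q1 L →
      ∃ M χ, Wit L j' (gE (fP L) (j' - 1)) M χ)
    (hcase : j = 1 ∨ (2 ≤ j ∧ j - 2 < (fP L).length ∧ gE (fP L) (j - 2) < qA q ∧
      gE (fP L) (j - 2) < q1 L)) :
    ∃ M χ, Wit (L ++ [q]) j (qA q) M χ := by
  have hsubq : [q].Sublist (L ++ [q]) := (List.suffix_append L [q]).sublist
  have hokq : okQ q := h.1 q (by simp)
  rcases hcase with rfl | ⟨hj2, hjlen, hva, hvq⟩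
  · -- j = 1 : singleton chain
    refine ⟨[q], 1, ?_⟩
    refine ⟨hsubq, List.pairwise_singleton _ _, by simp, by simp, le_refl 1, ?_, ?_, ?_, ?_, ?_⟩
    · rw [fP_singleton]; simp
    · rw [fP_singleton]; simp [gE]
    · intro x hx
      simp only [List.map_singleton, List.mem_singleton] at hx
      rw [fP_singleton, hx]
      simp
    · intro i h1 h2
      rw [fP_singleton] at h2
      simp at h2
      omega
    · right; right
      exact ⟨[], q, by simp, by rw [fP_nil]; simp⟩
  · obtain ⟨M', χ', w'⟩ := IH (j - 1) (by omega) (by omega)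
      (by rw [show j - 1 - 1 = j - 2 from by omega]; exact hvq)
    rw [show j - 1 - 1 = j - 2 from by omega] at w'
    have hsub' : M'.Sublist (L ++ [q]) := w'.sub.trans (List.sublist_append_left L [q])
    have hHypM : Hyp M' := h.sublist hsub'
    have invM := inv_runS hHypM
    have hmono : ∀ i j', i ≤ j' → j' < (fP M').length → gE (fP M') i ≤ gE (fP M') j' :=
      invM.mono
    have hχ'1 : 1 ≤ χ' := le_trans (by omega) w'.hχ1
    have hreal' := w'.real
    have hlowS : ∀ i, i < χ' → gE (fP M') i < qA q := by
      intro i hi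
      have h1 := hmono i (χ' - 1) (by omega) (by have := w'.hχ2; omega)
      omega
    have hBlast : qB q ≤ qB (lastQd M') :=
      ((List.pairwise_append.1 h.2.1).2.2 (lastQd M') (w'.sub.subset (lastQd_mem w'.nen)) q
        (by simp)).1
    have htailS : ∀ i, χ' ≤ i → i + 1 < (fP M').length → qB q ≤ gE (fP M') i :=
      fun i h1 h2 => le_trans hBlast (w'.tail i h1 h2)
    have haLow : ∀ p ∈ M', qA p < qA q := by
      intro p hp
      have hx := w'.amem (qA p) (List.mem_map_of_mem hp)
      have := take_le_real hmono hχ'1 w'.hχ2 hx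
      omega
    have hchainMq : ChainQ (M' ++ [q]) := by
      rw [ChainQ, List.pairwise_append]
      refine ⟨w'.chain, List.pairwise_singleton _ _, ?_⟩
      intro p hp q' hq'
      rw [List.mem_singleton.1 hq']
      refine ⟨haLow p hp, ?_⟩
      have hlex := (List.pairwise_append.1 h.2.1).2.2 p (w'.sub.subset hp) q (by simp)
      rcases lt_or_eq_of_le hlex.1 with hlt | heq
      · exact hlt
      · have h3 := hlex.2 heq
        have h4 := haLow p hp
        omega
    have hsubMq : (M' ++ [q]).Sublist (L ++ [q]) := w'.sub.append (List.Sublist.refl [q])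
    have hfPMq : fP (M' ++ [q]) = (stepRQ (runS M') q).1 := fP_append M' q
    have hcard : (M' ++ [q]).length ≤ j := by
      rw [List.length_append]
      have := w'.card
      simp only [List.length_singleton]
      omega
    rcases hfi2 : (runS M').1.findIdx? (predQ q) with _ | i1
    · -- the chain row receives `qA q` by insertion
      have hw1 : wB (fP M') q ≤ (fP M').length := wB_le _ _
      have hw1ge : χ' ≤ wB (fP M') q := by
        rw [wB]
        apply takeWhile_length_ge w'.hχ2
        intro i hi
        have h1 := hlowS i hi
        have h2 := hokq.2.1
        simp only [decide_eq_true_eq]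
        omega
      have hfPv : fP (M' ++ [q]) = insertAt (fP M') (wB (fP M') q) (qA q) ++ [qD q] := by
        rw [hfPMq, stepRQ, hfi2]
        rfl
      have hlenv : (fP (M' ++ [q])).length = (fP M').length + 2 := by
        rw [hfPv]; exact length_insert_case hw1
      refine ⟨M' ++ [q], wB (fP M') q + 1, ?_⟩
      refine ⟨hsubMq, hchainMq, by simp, hcard, ?_, ?_, ?_, ?_, ?_, ?_⟩
      · have := w'.hχ1; omega
      · rw [hlenv]; omega
      · rw [hfPv, show wB (fP M') q + 1 - 1 = wB (fP M') q from by omega,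
          gE_insert_desc hw1]
        simp
      · intro x hx
        rw [List.map_append, List.mem_append] at hx
        rcases hx with hx | hx
        · obtain ⟨p, hp, rfl⟩ := List.mem_map.1 hx
          have hx' := w'.amem (qA p) (List.mem_map_of_mem hp)
          obtain ⟨i, hiχ, hilen, hval⟩ := mem_take_iff_gE.1 hx'
          rw [mem_take_iff_gE]
          refine ⟨i, by omega, by omega, ?_⟩
          rw [hfPv, gE_insert_desc hw1, if_pos (by omega)]
          exact hval
        · simp only [List.map_singleton, List.mem_singleton] at hx
          rw [hx, mem_take_iff_gE]
          refine ⟨wB (fP M') q, by omega, by omega, ?_⟩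
          rw [hfPv, gE_insert_desc hw1]
          simp
      · intro i h1 h2
        rw [lastQd_concat, hfPv, gE_insert_desc hw1]
        rw [hlenv] at h2
        rw [if_neg (by omega), if_neg (by omega), if_pos (by omega)]
        exact insert_high hmono (by omega) (by omega)
      · right; right
        exact ⟨M', q, rfl, hfi2⟩
    · -- the chain row receives `qA q` by a bump, necessarily at the last box
      obtain ⟨hi1eq, hχlen⟩ := first_bad_last hlowS htailS hfi2
      obtain ⟨hi1lt, hpi1, _⟩ := findIdx?_some_spec hfi2
      have hfPv : fP (M' ++ [q]) = (fP M').set i1 (qA q) := by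
        rw [hfPMq, stepRQ, hfi2]
        rfl
      have hlenv : (fP (M' ++ [q])).length = (fP M').length := by
        rw [hfPv]; simp
      refine ⟨M' ++ [q], (fP M').length, ?_⟩
      refine ⟨hsubMq, hchainMq, by simp, hcard, ?_, ?_, ?_, ?_, ?_, ?_⟩
      · have := w'.hχ1; omega
      · omega
      · rw [hfPv, ← hi1eq, gE_set_self (show i1 < (fP M').length from hi1lt)]
      · intro x hx
        rw [show (fP M').length = (fP (M' ++ [q])).length from hlenv.symm, List.take_length]
        obtain ⟨p, hp, rfl⟩ := List.mem_map.1 hx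
        exact chain_amem hchainMq p hp
      · intro i h1 h2
        omega
      · right; left
        rw [lastQd_concat, hfPv]
        have : ((fP M').set i1 (qA q)).length - 1 = i1 := by simp; omega
        rw [this, gE_set_self (show i1 < (fP M').length from hi1lt)]

end Stmt12Aux


namespace Stmt12Aux
open OBRSKPaper

/-- The construction realizing the value `qD q` at the end of a chain row. -/
lemma realize_high {L : List Quad} {q : Quad} (h : Hyp (L ++ [q])) {n v : ℕ}
    {M' : List Quad} {χ' : ℕ} (w' : Wit L n v M' χ') (hn1 : 1 ≤ n) (hva : v < qA q)
    (heven : Even n) :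
    ∃ M χ, Wit (L ++ [q]) (n + 2) (qD q) M χ := by
  have hokq : okQ q := h.1 q (by simp)
  have hsub' : M'.Sublist (L ++ [q]) := w'.sub.trans (List.sublist_append_left L [q])
  have hHypM : Hyp M' := h.sublist hsub'
  have invM := inv_runS hHypM
  have hmono : ∀ i j', i ≤ j' → j' < (fP M').length → gE (fP M') i ≤ gE (fP M') j' :=
    invM.mono
  have hχ'1 : 1 ≤ χ' := le_trans (by omega) w'.hχ1
  have hreal' := w'.real
  have hlowS : ∀ i, i < χ' → gE (fP M') i < qA q := by
    intro i hi
    have h1 := hmono i (χ' - 1) (by omega) (by have := w'.hχ2; omega)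
    omega
  have hBlast : qB q ≤ qB (lastQd M') :=
    ((List.pairwise_append.1 h.2.1).2.2 (lastQd M') (w'.sub.subset (lastQd_mem w'.nen)) q
      (by simp)).1
  have htailS : ∀ i, χ' ≤ i → i + 1 < (fP M').length → qB q ≤ gE (fP M') i :=
    fun i h1 h2 => le_trans hBlast (w'.tail i h1 h2)
  have haLow : ∀ p ∈ M', qA p < qA q := by
    intro p hp
    have hx := w'.amem (qA p) (List.mem_map_of_mem hp)
    have := take_le_real hmono hχ'1 w'.hχ2 hx
    omega
  have hchainExt : ∀ N : List Quad, N.Sublist M' → ChainQ (N ++ [q]) := by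
    intro N hN
    rw [ChainQ, List.pairwise_append]
    refine ⟨w'.chain.sublist hN, List.pairwise_singleton _ _, ?_⟩
    intro p hp q' hq'
    rw [List.mem_singleton.1 hq']
    have hp' := hN.subset hp
    refine ⟨haLow p hp', ?_⟩
    have hlex := (List.pairwise_append.1 h.2.1).2.2 p (w'.sub.subset hp') q (by simp)
    rcases lt_or_eq_of_le hlex.1 with hlt | heq
    · exact hlt
    · have h3 := hlex.2 heq
      have h4 := haLow p hp'
      omega
  have hχ'n : n ≤ χ' := w'.hχ1
  have hSn : n ≤ (fP M').length := le_trans hχ'n w'.hχ2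
  rcases hfi2 : (runS M').1.findIdx? (predQ q) with _ | i1
  · -- no entry of the chain row lies in `[qA q, qB q)` : extend directly
    have hw1 : wB (fP M') q ≤ (fP M').length := wB_le _ _
    have hfPv : fP (M' ++ [q]) = insertAt (fP M') (wB (fP M') q) (qA q) ++ [qD q] := by
      rw [fP_append, stepRQ, hfi2]; rfl
    have hlenv : (fP (M' ++ [q])).length = (fP M').length + 2 := by
      rw [hfPv]; exact length_insert_case hw1
    refine ⟨M' ++ [q], (fP M').length + 2, ?_⟩
    refine ⟨w'.sub.append (List.Sublist.refl [q]), hchainExt M' (List.Sublist.refl M'),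
      by simp, ?_, by omega, by omega, ?_, ?_, ?_, ?_⟩
    · rw [List.length_append]
      have := w'.card
      simp only [List.length_singleton]
      omega
    · rw [hfPv, gE_insert_desc hw1]
      rw [if_neg (by omega), if_neg (by omega), if_neg (by omega), if_pos (by omega)]
    · intro x hx
      rw [show (fP M').length + 2 = (fP (M' ++ [q])).length from hlenv.symm, List.take_length]
      obtain ⟨p, hp, rfl⟩ := List.mem_map.1 hx
      exact chain_amem (hchainExt M' (List.Sublist.refl M')) p hp
    · intro i h1 h2
      omega
    · right; right
      exact ⟨M', q, rfl, hfi2⟩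
  · -- the chain row has an entry in `[qA q, qB q)` : it is the final `qD` box; clean it
    obtain ⟨hi1eq, hχlen⟩ := first_bad_last hlowS htailS hfi2
    obtain ⟨hi1lt, hpi1, _⟩ := findIdx?_some_spec hfi2
    rw [predQ_iff] at hpi1
    have hi1lt' : i1 < (fP M').length := hi1lt
    have hpi1' : qA q ≤ gE (fP M') i1 ∧ gE (fP M') i1 < qB q := hpi1
    -- rule out the first two disjuncts of `lastp`
    rcases w'.lastp with hl1 | hl2 | ⟨τ, r, hMr, hfiτ⟩
    · exfalso
      rw [← hi1eq] at hl1
      omega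
    · exfalso
      rw [← hi1eq] at hl2
      have := haLow (lastQd M') (lastQd_mem w'.nen)
      omega
    · -- cleaning step
      have hsubτ : τ.Sublist M' := by
        rw [hMr]; exact List.sublist_append_left τ [r]
      have hwr : wB (fP τ) r ≤ (fP τ).length := wB_le _ _
      have hfPM' : fP M' = insertAt (fP τ) (wB (fP τ) r) (qA r) ++ [qD r] := by
        rw [hMr, fP_append, stepRQ, show (runS τ).1.findIdx? (predQ r) = none from hfiτ]
        rfl
      have hlenS : (fP M').length = (fP τ).length + 2 := by
        rw [hfPM']; exact length_insert_case hwr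
      have hevenS : Even (fP M').length := invM.evenP
      have hlenge : n + 2 ≤ (fP M').length := by
        obtain ⟨m1, hm1⟩ := heven
        obtain ⟨m2, hm2⟩ := hevenS
        omega
      have hTlen : n ≤ (fP τ).length := by omega
      have hTclean : ∀ e ∈ fP τ, ¬ predQ q e = true := by
        intro e he
        have heA : e ∈ insertAt (fP τ) (wB (fP τ) r) (qA r) := mem_insertAt.2 (Or.inr he)
        obtain ⟨i2, hi2, hval2⟩ := mem_iff_gE.1 heA
        rw [length_insertAt hwr] at hi2
        have hval3 : gE (fP M') i2 = e := by
          rw [hfPM', gE_append_left (by rw [length_insertAt hwr]; omega), hval2]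
        rw [predQ_iff]
        by_cases hc : i2 < χ'
        · have := hlowS i2 hc
          omega
        · have := htailS i2 (by omega) (by omega)
          omega
      have hfiT : (runS τ).1.findIdx? (predQ q) = none := by
        rw [List.findIdx?_eq_none_iff]
        intro x hx
        have := hTclean x hx
        simpa using this
      have hwq : wB (fP τ) q ≤ (fP τ).length := wB_le _ _
      have hfPM : fP (τ ++ [q]) = insertAt (fP τ) (wB (fP τ) q) (qA q) ++ [qD q] := by
        rw [fP_append, stepRQ, hfiT]; rfl
      have hlenM : (fP (τ ++ [q])).length = (fP τ).length + 2 := by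
        rw [hfPM]; exact length_insert_case hwq
      have hchainτ : ChainQ (τ ++ [q]) := hchainExt τ hsubτ
      refine ⟨τ ++ [q], (fP τ).length + 2, ?_⟩
      refine ⟨(hsubτ.trans w'.sub).append (List.Sublist.refl [q]), hchainτ, by simp, ?_,
        by omega, by omega, ?_, ?_, ?_, ?_⟩
      · have hcard' := w'.card
        rw [hMr, List.length_append] at hcard'
        rw [List.length_append]
        simp only [List.length_singleton] at hcard' ⊢
        omega
      · rw [hfPM, gE_insert_desc hwq]
        rw [if_neg (by omega), if_neg (by omega), if_neg (by omega), if_pos (by omega)]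
      · intro x hx
        rw [show (fP τ).length + 2 = (fP (τ ++ [q])).length from hlenM.symm, List.take_length]
        obtain ⟨p, hp, rfl⟩ := List.mem_map.1 hx
        exact chain_amem hchainτ p hp
      · intro i h1 h2
        omega
      · right; right
        exact ⟨τ, q, rfl, hfiT⟩

end Stmt12Aux


namespace Stmt12Aux
open OBRSKPaper

theorem main_abs : ∀ (L : List Quad), Hyp L → ∀ j, 1 ≤ j → j ≤ (fP L).length →
    gE (fP L) (j - 1) < q1 L → ∃ M χ, Wit L j (gE (fP L) (j - 1)) M χ := by
  intro L
  induction L using List.reverseRecOn with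
  | nil =>
    intro _ j hj1 hj2 _
    rw [fP_nil] at hj2
    simp at hj2
    omega
  | append_singleton L q ih =>
    intro h j hj1 hj2 hjq
    have hL : Hyp L := h.sublist (by simp)
    have inv := inv_runS hL
    have hIH : ∀ j', 1 ≤ j' → j' ≤ (fP L).length → gE (fP L) (j' - 1) < q1 L →
        ∃ M χ, Wit L j' (gE (fP L) (j' - 1)) M χ := ih hL
    have hokq : okQ q := h.1 q (by simp)
    have hmonoL : ∀ i j', i ≤ j' → j' < (fP L).length → gE (fP L) i ≤ gE (fP L) j' :=
      inv.mono
    rcases hfi : (runS L).1.findIdx? (predQ q) with _ | i0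
    · -- INSERTION case
      have hfi' : (fP L).findIdx? (predQ q) = none := hfi
      have hw : wB (fP L) q ≤ (fP L).length := wB_le _ _
      have hfPv : fP (L ++ [q]) = insertAt (fP L) (wB (fP L) q) (qA q) ++ [qD q] := by
        rw [fP_append, stepRQ, hfi]; rfl
      have hlenv : (fP (L ++ [q])).length = (fP L).length + 2 := by
        rw [hfPv]; exact length_insert_case hw
      have hq1 : q1 (L ++ [q]) = qB q := q1_append_none hfi
      rw [hq1] at hjq
      rw [hlenv] at hj2
      have hq1L : (fP L) ≠ [] → qB q ≤ q1 L := fun hne => q1L_ge h inv hne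
      rcases lt_trichotomy (j - 1) (wB (fP L) q) with hc | hc | hc
      · -- an old entry below the insertion point
        have hval : gE (fP (L ++ [q])) (j - 1) = gE (fP L) (j - 1) := by
          rw [hfPv, gE_insert_desc hw, if_pos hc]
        have hlow : gE (fP L) (j - 1) < qA q := insert_low hfi' hc
        have hne : fP L ≠ [] := List.ne_nil_of_length_pos (by omega)
        obtain ⟨M, χ, wit⟩ := hIH j hj1 (by omega)
          (by have := hq1L hne; have := hokq.2.1; omega)
        rw [hval]
        exact ⟨M, χ, wit.transfer (List.sublist_append_left L [q])⟩
      · -- the new box `qA q`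
        have hval : gE (fP (L ++ [q])) (j - 1) = qA q := by
          rw [hfPv, gE_insert_desc hw, if_neg (by omega), if_pos hc]
        rw [hval]
        apply realize_low h j hIH
        rcases Nat.lt_or_ge j 2 with h1 | h1
        · left; omega
        · right
          have hlo := insert_low hfi' (i := j - 2) (by omega)
          have hne : fP L ≠ [] := List.ne_nil_of_length_pos (by omega)
          exact ⟨h1, by omega, hlo, by have := hq1L hne; have := hokq.2.1; omega⟩
      · by_cases hcase2 : j - 1 ≤ (fP L).length
        · -- a shifted old entry : impossible since it would be `≥ qB q = q1`
          exfalso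
          have hval : gE (fP (L ++ [q])) (j - 1) = gE (fP L) (j - 1 - 1) := by
            rw [hfPv, gE_insert_desc hw, if_neg (by omega), if_neg (by omega), if_pos hcase2]
          have hhigh := insert_high (q := q) hmonoL (i := j - 1 - 1) (by omega) (by omega)
          omega
        · -- the appended `qD q` box
          have hj1e : j - 1 = (fP L).length + 1 := by omega
          have hval : gE (fP (L ++ [q])) (j - 1) = qD q := by
            rw [hfPv, gE_insert_desc hw, if_neg (by omega), if_neg (by omega),
              if_neg (by omega), if_pos hj1e]
          rw [hval] at hjq ⊢
          have hwfull : wB (fP L) q = (fP L).length := by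
            by_contra hcon
            have hwlt : wB (fP L) q < (fP L).length := by omega
            have h1 := insert_high (q := q) hmonoL (i := wB (fP L) q) (le_refl _) hwlt
            have h2 : gE (fP L) (wB (fP L) q) ≤ qD q :=
              entries_le_qD h inv _ (gE_mem hwlt)
            omega
          rcases Nat.eq_zero_or_pos (fP L).length with hn0 | hnpos
          · -- empty previous row : singleton chain
            have hj2' : j = 2 := by omega
            subst hj2'
            refine ⟨[q], 2, ?_⟩
            refine ⟨(List.suffix_append L [q]).sublist, List.pairwise_singleton _ _, by simp,
              by simp, le_refl 2, ?_, ?_, ?_, ?_, ?_⟩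
            · rw [fP_singleton]; simp
            · rw [fP_singleton]; simp [gE]
            · intro x hx
              simp only [List.map_singleton, List.mem_singleton] at hx
              rw [fP_singleton, hx]
              simp
            · intro i h1 h2
              rw [fP_singleton] at h2; simp at h2; omega
            · right; right
              exact ⟨[], q, by simp, by rw [fP_nil]; simp⟩
          · -- nonempty previous row : use `realize_high` with the chain for position `n`
            set n := (fP L).length with hn
            have hne : fP L ≠ [] := List.ne_nil_of_length_pos (by omega)
            have hlown : gE (fP L) (n - 1) < qA q := insert_low hfi' (by omega)
            obtain ⟨M', χ', w'⟩ := hIH n (by omega) (le_refl _)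
              (by have := hq1L hne; have := hokq.2.1; omega)
            have hj2e : j = n + 2 := by omega
            subst hj2e
            exact realize_high h w' (by omega) hlown inv.evenP
    · -- BUMP case
      have hfi' : (fP L).findIdx? (predQ q) = some i0 := hfi
      obtain ⟨hi0, hpi0, hbel0⟩ := findIdx?_some_spec hfi'
      rw [predQ_iff] at hpi0
      have hi0' : i0 < (fP L).length := hi0
      have hfPv : fP (L ++ [q]) = (fP L).set i0 (qA q) := by
        rw [fP_append, stepRQ, hfi]; rfl
      have hlenv : (fP (L ++ [q])).length = (fP L).length := by rw [hfPv]; simp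
      rw [hlenv] at hj2
      have hne : fP L ≠ [] := List.ne_nil_of_length_pos (by omega)
      have hq1L : qB q ≤ q1 L := q1L_ge h inv hne
      have hlow : ∀ i2, i2 < i0 → gE (fP L) i2 < qA q := by
        intro i2 hi2
        have h1 := hbel0 i2 hi2
        rw [predQ_iff] at h1
        have h2 := hmonoL i2 i0 (le_of_lt hi2) hi0'
        omega
      rcases lt_trichotomy (j - 1) i0 with hc | hc | hc
      · -- an entry before the bump position
        have hval : gE (fP (L ++ [q])) (j - 1) = gE (fP L) (j - 1) := by
          rw [hfPv, gE_set_ne (by omega)]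
        have hl := hlow (j - 1) hc
        obtain ⟨M, χ, wit⟩ := hIH j hj1 (by omega)
          (by have := hokq.2.1; omega)
        rw [hval]
        exact ⟨M, χ, wit.transfer (List.sublist_append_left L [q])⟩
      · -- the bumped box
        have hval : gE (fP (L ++ [q])) (j - 1) = qA q := by
          rw [hfPv, hc, gE_set_self hi0']
        rw [hval]
        apply realize_low h j hIH
        rcases Nat.lt_or_ge j 2 with h1 | h1
        · left; omega
        · right
          have hl := hlow (j - 2) (by omega)
          exact ⟨h1, by omega, hl, by have := hokq.2.1; omega⟩
      · -- an entry after the bump position : `q1` is preserved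
        have hq1p : q1 (L ++ [q]) = q1 L := by
          apply q1_append_some hfi
          rw [inv.len]
          exact (by omega : i0 + 1 < (fP L).length)
        rw [hq1p] at hjq
        have hval : gE (fP (L ++ [q])) (j - 1) = gE (fP L) (j - 1) := by
          rw [hfPv, gE_set_ne (by omega)]
        rw [hval] at hjq ⊢
        obtain ⟨M, χ, wit⟩ := hIH j hj1 (by omega) hjq
        exact ⟨M, χ, wit.transfer (List.sublist_append_left L [q])⟩

end Stmt12Aux


/-! #### Translation layer : the quad list of a prefix pair -/

namespace Stmt12Aux
open OBRSKPaper

lemma getD_eq_getElem' {α : Type} (d : α) {l : List α} {i : ℕ} (h : i < l.length) :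
    l.getD i d = l[i] := by
  simp [List.getD_eq_getElem?_getD, List.getElem?_eq_getElem h]

lemma getD_eq_d {α : Type} (d : α) {l : List α} {i : ℕ} (h : l.length ≤ i) :
    l.getD i d = d := by
  simp [List.getD_eq_getElem?_getD, List.getElem?_eq_none h]

def dQ : Quad := (0, 0, 0, 0)

def qE (l : List Quad) (i : ℕ) : Quad := l.getD i dQ

lemma qE_eq_getElem {l : List Quad} {i : ℕ} (h : i < l.length) : qE l i = l[i] :=
  getD_eq_getElem' dQ h

lemma mem_iff_qE {l : List Quad} {x : Quad} : x ∈ l ↔ ∃ i, i < l.length ∧ qE l i = x := by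
  constructor
  · intro hx
    obtain ⟨i, hi, rfl⟩ := List.getElem_of_mem hx
    exact ⟨i, hi, qE_eq_getElem hi⟩
  · rintro ⟨i, hi, rfl⟩
    rw [qE_eq_getElem hi]
    exact List.getElem_mem hi

lemma getD_take {α : Type} (d : α) {l : List α} {m i : ℕ} (h : i < m) :
    (l.take m).getD i d = l.getD i d := by
  by_cases hi : i < l.length
  · rw [getD_eq_getElem' d (by simp [h, hi]), getD_eq_getElem' d hi]
    exact List.getElem_take
  · rw [getD_eq_d d (by simp [Nat.le_of_not_lt hi]), getD_eq_d d (Nat.le_of_not_lt hi)]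

lemma getD_drop {α : Type} (d : α) (l : List α) (n i : ℕ) :
    (l.drop n).getD i d = l.getD (n + i) d := by
  simp [List.getD_eq_getElem?_getD, List.getElem?_drop]

lemma getD_reverse {α : Type} (d : α) {l : List α} {i : ℕ} (h : i < l.length) :
    l.reverse.getD i d = l.getD (l.length - 1 - i) d := by
  rw [getD_eq_getElem' d (by simpa using h), getD_eq_getElem' d (by omega)]
  exact List.getElem_reverse _

lemma getD_zip {α β : Type} {l1 : List α} {l2 : List β} {i : ℕ} (h1 : i < l1.length)
    (h2 : i < l2.length) {d1 : α} {d2 : β} :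
    (l1.zip l2).getD i (d1, d2) = (l1.getD i d1, l2.getD i d2) := by
  rw [getD_eq_getElem' _ (by rw [List.length_zip]; omega), getD_eq_getElem' _ h1,
    getD_eq_getElem' _ h2]
  exact List.getElem_zip

lemma mem_zip_elim {l1 l2 : List ℕ} {x : ℕ × ℕ} (h : x ∈ l1.zip l2) :
    ∃ i, i < l1.length ∧ i < l2.length ∧ x = (gE l1 i, gE l2 i) := by
  obtain ⟨i, hi, hx⟩ := List.getElem_of_mem h
  rw [List.length_zip, lt_min_iff] at hi
  refine ⟨i, hi.1, hi.2, ?_⟩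
  rw [← hx, List.getElem_zip, gE_eq_getElem hi.1, gE_eq_getElem hi.2]

lemma zip_mem_intro {l1 l2 : List ℕ} {i : ℕ} (h1 : i < l1.length) (h2 : i < l2.length) :
    (gE l1 i, gE l2 i) ∈ l1.zip l2 := by
  have hi : i < (l1.zip l2).length := by rw [List.length_zip]; omega
  have : (l1.zip l2)[i] = (gE l1 i, gE l2 i) := by
    rw [List.getElem_zip, gE_eq_getElem h1, gE_eq_getElem h2]
  rw [← this]
  exact List.getElem_mem hi

lemma gE_map_q {f : Quad → ℕ} {M : List Quad} {i : ℕ} (h : i < M.length) :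
    gE (M.map f) i = f (qE M i) := by
  rw [gE_eq_getElem (by simpa using h), qE_eq_getElem h, List.getElem_map]

/-- Monotonicity along a lexicographic two-row array. -/
lemma lex_mono {top bot : List ℕ} (h : LexTwoRow top bot) :
    ∀ i' i, i ≤ i' → i' < top.length →
      top.getD i' 0 ≤ top.getD i 0 ∧
      (top.getD i' 0 = top.getD i 0 → bot.getD i' 0 ≤ bot.getD i 0) := by
  intro i'
  induction i' with
  | zero =>
    intro i hi _
    have : i = 0 := by omega
    subst this
    exact ⟨le_refl _, fun _ => le_refl _⟩
  | succ n ihn =>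
    intro i hi hlen
    rcases Nat.eq_or_lt_of_le hi with rfl | hlt
    · exact ⟨le_refl _, fun _ => le_refl _⟩
    · have hstep := h n hlen
      have hprev := ihn i (by omega) (by omega)
      constructor
      · exact le_trans hstep.1 hprev.1
      · intro heq
        have h1 : top.getD (n+1) 0 = top.getD n 0 := by
          have := hstep.1
          have := hprev.1
          omega
        have h2 : top.getD n 0 = top.getD i 0 := by omega
        exact le_trans (hstep.2 h1) (hprev.2 h2)

/-- The quad list associated to the `k`-prefix of `π`. -/
def pL (π : ArrayPair) (k : ℕ) : List Quad :=
  ((π.prefixPair k).quads).take (π.prefixPair k).t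

lemma prefixPair_t {π : ArrayPair} {k : ℕ} (hk2 : k ≤ π.t) : (π.prefixPair k).t = k := by
  simp [ArrayPair.prefixPair, ArrayPair.t]
  exact hk2

lemma pL_length {π : ArrayPair} {k : ℕ} (hlex : π.SkewSymmLex) (hk2 : k ≤ π.t) :
    (pL π k).length = k := by
  obtain ⟨⟨ha, hc, hd⟩, _⟩ := hlex
  have hb : π.b.length = π.t := rfl
  rw [pL, List.length_take, prefixPair_t hk2]
  simp [ArrayPair.quads, ArrayPair.prefixPair]
  omega

lemma pL_get {π : ArrayPair} {k : ℕ} (hlex : π.SkewSymmLex) (hk2 : k ≤ π.t) {i : ℕ}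
    (hi : i < k) :
    qE (pL π k) i =
      (gE π.a i, gE π.b i, gE π.c (π.t - 1 - i), gE π.d (π.t - 1 - i)) := by
  obtain ⟨⟨ha, hc, hd⟩, _⟩ := hlex
  have hb : π.b.length = π.t := rfl
  rw [pL, qE, getD_take _ (by rw [prefixPair_t hk2]; exact hi)]
  show (((π.a.take k).zip ((π.b.take k).zip
    (((π.c.drop (π.t - k)).reverse).zip ((π.d.drop (π.t - k)).reverse)))).getD i dQ) = _
  have hlc : (π.c.drop (π.t - k)).length = k := by simp [hc]; omega
  have hld : (π.d.drop (π.t - k)).length = k := by simp [hd]; omega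
  have hgc : (π.c.drop (π.t - k)).reverse.getD i 0 = gE π.c (π.t - 1 - i) := by
    rw [getD_reverse _ (by rw [hlc]; exact hi), hlc, getD_drop]
    rw [gE]
    congr 1
    omega
  have hgd : (π.d.drop (π.t - k)).reverse.getD i 0 = gE π.d (π.t - 1 - i) := by
    rw [getD_reverse _ (by rw [hld]; exact hi), hld, getD_drop]
    rw [gE]
    congr 1
    omega
  rw [show dQ = ((0 : ℕ), ((0 : ℕ), ((0 : ℕ), (0 : ℕ)))) from rfl]
  rw [getD_zip (by simp; omega) (by simp [hlc, hld]; omega)]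
  rw [getD_zip (by simp; omega) (by simp [hlc, hld]; omega)]
  rw [getD_zip (by simp [hlc]; omega) (by simp [hld]; omega)]
  rw [getD_take _ hi, getD_take _ hi, hgc, hgd]
  rfl

end Stmt12Aux


namespace Stmt12Aux
open OBRSKPaper

lemma pairs_pL_subset {π : ArrayPair} {k : ℕ} (hlex : π.SkewSymmLex) (hk2 : k ≤ π.t) :
    pairsOf (pL π k) ⊆ π.entryDual := by
  obtain ⟨⟨ha, hc, hd⟩, hrest⟩ := hlex
  have hb : π.b.length = π.t := rfl
  intro p hp
  rw [pairsOf, List.mem_flatMap] at hp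
  obtain ⟨qd, hqd, hmem⟩ := hp
  obtain ⟨i0, hi0, hqE⟩ := mem_iff_qE.1 hqd
  rw [pL_length ⟨⟨ha, hc, hd⟩, hrest⟩ hk2] at hi0
  rw [pL_get ⟨⟨ha, hc, hd⟩, hrest⟩ hk2 hi0] at hqE
  subst hqE
  have hi0t : i0 < π.t := by omega
  have hgcrev : gE π.c.reverse i0 = gE π.c (π.t - 1 - i0) := by
    rw [gE, getD_reverse _ (by omega : i0 < π.c.length), hc]; rfl
  have hgdrev : gE π.d.reverse i0 = gE π.d (π.t - 1 - i0) := by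
    rw [gE, getD_reverse _ (by omega : i0 < π.d.length), hd]; rfl
  have hgarev : gE π.a.reverse (π.t - 1 - i0) = gE π.a i0 := by
    rw [gE, getD_reverse _ (by omega : π.t - 1 - i0 < π.a.length), ha]
    congr 1
    omega
  have hgbrev : gE π.b.reverse (π.t - 1 - i0) = gE π.b i0 := by
    rw [gE, getD_reverse _ (by omega : π.t - 1 - i0 < π.b.length), hb]
    congr 1
    omega
  rw [ArrayPair.entryDual]
  simp only [qA, qB, qC, qD, List.mem_cons, List.mem_singleton, List.not_mem_nil, or_false] at hmem
  rcases hmem with rfl | rfl | rfl | rfl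
  · -- (a i0, c (t-1-i0)) ∈ a.zip c.reverse
    refine List.mem_append.2 (Or.inl (List.mem_append.2 (Or.inl (List.mem_append.2 (Or.inl ?_)))))
    have := zip_mem_intro (l1 := π.a) (l2 := π.c.reverse) (i := i0) (by omega) (by simp [hc]; omega)
    rwa [hgcrev] at this
  · refine List.mem_append.2 (Or.inl (List.mem_append.2 (Or.inl (List.mem_append.2 (Or.inr ?_)))))
    have := zip_mem_intro (l1 := π.b) (l2 := π.d.reverse) (i := i0) (by omega) (by simp [hd]; omega)
    rwa [hgdrev] at this
  · refine List.mem_append.2 (Or.inl (List.mem_append.2 (Or.inr ?_)))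
    have := zip_mem_intro (l1 := π.c) (l2 := π.a.reverse) (i := π.t - 1 - i0)
      (by omega) (by simp [ha]; omega)
    rwa [hgarev] at this
  · refine List.mem_append.2 (Or.inr ?_)
    have := zip_mem_intro (l1 := π.d) (l2 := π.b.reverse) (i := π.t - 1 - i0)
      (by omega) (by simp [hb]; omega)
    rwa [hgbrev] at this

lemma hyp_pL {π : ArrayPair} {k : ℕ} (hlex : π.SkewSymmLex) (hneg : π.Negative)
    (hk2 : k ≤ π.t) : Hyp (pL π k) := by
  have hlex' := hlex
  obtain ⟨⟨ha, hc, hd⟩, hpos, hlba, hldc, had, hbc, hdual, hsk⟩ := hlex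
  have hb : π.b.length = π.t := rfl
  have hlen := pL_length hlex' hk2
  refine ⟨?_, ?_, ?_⟩
  · -- okQ
    intro q hq
    obtain ⟨i0, hi0, hqE⟩ := mem_iff_qE.1 hq
    rw [hlen] at hi0
    rw [pL_get hlex' hk2 hi0] at hqE
    subst hqE
    have hi0t : i0 < π.t := by omega
    have h1 : gE π.a i0 < gE π.b i0 := by
      have := hneg _ (zip_mem_intro (l1 := π.a) (l2 := π.b) (i := i0) (by omega) (by omega))
      exact this
    have h2 : gE π.a i0 < gE π.d (π.t - 1 - i0) := by
      have hrev : gE π.d.reverse i0 = gE π.d (π.t - 1 - i0) := by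
        rw [gE, getD_reverse _ (by omega : i0 < π.d.length), hd]; rfl
      have := had _ (zip_mem_intro (l1 := π.a) (l2 := π.d.reverse) (i := i0)
        (by omega) (by simp [hd]; omega))
      rwa [hrev] at this
    have h3 : gE π.b i0 < gE π.c (π.t - 1 - i0) := by
      have hrev : gE π.c.reverse i0 = gE π.c (π.t - 1 - i0) := by
        rw [gE, getD_reverse _ (by omega : i0 < π.c.length), hc]; rfl
      have := hbc _ (zip_mem_intro (l1 := π.b) (l2 := π.c.reverse) (i := i0)
        (by omega) (by simp [hc]; omega))
      rwa [hrev] at this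
    have h4 : gE π.d (π.t - 1 - i0) < gE π.c (π.t - 1 - i0) := by
      have := (hsk i0 hi0t).1
      simp only [gE] at h1 ⊢
      exact this h1
    have h5 : 0 < gE π.a i0 := by
      apply hpos
      have : gE π.a i0 ∈ π.a := gE_mem (by omega)
      simp [this]
    exact ⟨h5, h1, h2, h3, h4⟩
  · -- pairwise lexR
    rw [List.pairwise_iff_getElem]
    intro i j2 hi hj2 hij
    rw [hlen] at hi hj2
    rw [← qE_eq_getElem (by rw [hlen]; exact hi), ← qE_eq_getElem (by rw [hlen]; exact hj2)]
    rw [pL_get hlex' hk2 hi, pL_get hlex' hk2 hj2]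
    have hmono := lex_mono hlba j2 i (by omega) (by omega)
    exact ⟨hmono.1, fun hteq => (hmono.2 hteq)⟩
  · exact dualityProp_mono hdual (pairs_pL_subset hlex' hk2)

lemma pL_heads {π : ArrayPair} (k : ℕ) :
    (OBRSKneg (π.prefixPair k)).P.getD 0 [] = fP (pL π k) ∧
    ((OBRSKneg (π.prefixPair k)).Q.getD 0 []).getD 0 0 = q1 (pL π k) := by
  constructor
  · exact OBRSKneg_P_head (π.prefixPair k)
  · rw [OBRSKneg_Q_head (π.prefixPair k)]
    rfl

lemma filter_lt_bound {R : List ℕ} (hmono : ∀ i j, i ≤ j → j < R.length → gE R i ≤ gE R j)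
    {z j : ℕ} (hj1 : 1 ≤ j) (hj : j ≤ (R.filter (fun x => decide (x < z))).length) :
    j ≤ R.length ∧ gE R (j - 1) < z := by
  have hlen : (R.filter (fun x => decide (x < z))).length ≤ R.length :=
    List.length_filter_le _ _
  refine ⟨le_trans hj hlen, ?_⟩
  by_contra hcon
  push_neg at hcon
  have hdropnil : (R.drop (j - 1)).filter (fun x => decide (x < z)) = [] := by
    rw [List.filter_eq_nil_iff]
    intro x hx
    obtain ⟨i2, hi2, hgE⟩ := mem_iff_gE.1 hx
    have hlen2 : (R.drop (j - 1)).length = R.length - (j - 1) := by simp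
    have : gE (R.drop (j - 1)) i2 = gE R (j - 1 + i2) := getD_drop 0 R (j - 1) i2
    rw [this] at hgE
    have hge : z ≤ gE R (j - 1 + i2) := le_trans hcon (hmono (j - 1) (j - 1 + i2)
      (by omega) (by omega))
    subst hgE
    simp only [decide_eq_true_eq]
    omega
  have hsplit : R.filter (fun x => decide (x < z)) =
      (R.take (j - 1)).filter (fun x => decide (x < z)) ++
      (R.drop (j - 1)).filter (fun x => decide (x < z)) := by
    rw [← List.filter_append, List.take_append_drop]
  rw [hsplit, hdropnil, List.append_nil] at hj
  have : ((R.take (j - 1)).filter (fun x => decide (x < z))).length ≤ j - 1 :=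
    le_trans (List.length_filter_le _ _) (by simp)
  omega

end Stmt12Aux


namespace Stmt12Aux
open OBRSKPaper

def sigmaOf (M : List Quad) : ArrayPair :=
  ⟨M.map qA, M.map qB, (M.map qC).reverse, (M.map qD).reverse⟩

lemma sigmaOf_t (M : List Quad) : (sigmaOf M).t = M.length := by
  simp [sigmaOf, ArrayPair.t]

lemma zip_maps (M : List Quad) :
    (M.map qA).zip ((M.map qB).zip ((M.map qC).zip (M.map qD))) = M := by
  induction M with
  | nil => rfl
  | cons q M ih =>
    simp only [List.map_cons, List.zip_cons_cons, ih]
    rfl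

lemma sigmaOf_quads (M : List Quad) : (sigmaOf M).quads = M := by
  rw [ArrayPair.quads]
  show ((M.map qA).zip ((M.map qB).zip (((M.map qC).reverse).reverse.zip
    ((M.map qD).reverse.reverse)))) = M
  rw [List.reverse_reverse, List.reverse_reverse]
  exact zip_maps M

lemma sigmaOf_head (M : List Quad) : (OBRSKneg (sigmaOf M)).P.getD 0 [] = fP M := by
  rw [OBRSKneg_P_head, sigmaOf_quads]
  have ht : (sigmaOf M).t = M.length := sigmaOf_t M
  rw [ht, List.take_length]
  rfl

lemma build_sigma {π : ArrayPair} {k : ℕ} (hlex : π.SkewSymmLex) (hneg : π.Negative)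
    (hk2 : k ≤ π.t) {M : List Quad} (hMsub : M.Sublist (pL π k)) (hchain : ChainQ M) :
    DualChainIn (π.prefixPair k) (sigmaOf M) := by
  have hHypM : Hyp M := (hyp_pL hlex hneg hk2).sublist hMsub
  obtain ⟨⟨ha, hc, hd⟩, hpos, hlba, hldc, had, hbc, hdual, hsk⟩ := hlex
  have hlex' : π.SkewSymmLex := ⟨⟨ha, hc, hd⟩, hpos, hlba, hldc, had, hbc, hdual, hsk⟩
  have hb : π.b.length = π.t := rfl
  have hpLlen := pL_length hlex' hk2
  set m := M.length with hm
  have hσa : ∀ i, i < m → (M.map qA).getD i 0 = qA (qE M i) := fun i hi => gE_map_q hi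
  have hσb : ∀ i, i < m → (M.map qB).getD i 0 = qB (qE M i) := fun i hi => gE_map_q hi
  have hσc : ∀ i, i < m → ((M.map qC).reverse).getD i 0 = qC (qE M (m - 1 - i)) := by
    intro i hi
    rw [show ((M.map qC).reverse).getD i 0 = gE ((M.map qC).reverse) i from rfl, gE,
      getD_reverse _ (by simpa using hi)]
    simp only [List.length_map]
    exact gE_map_q (by omega)
  have hσd : ∀ i, i < m → ((M.map qD).reverse).getD i 0 = qD (qE M (m - 1 - i)) := by
    intro i hi
    rw [show ((M.map qD).reverse).getD i 0 = gE ((M.map qD).reverse) i from rfl, gE,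
      getD_reverse _ (by simpa using hi)]
    simp only [List.length_map]
    exact gE_map_q (by omega)
  have hmemM : ∀ i, i < m → qE M i ∈ M := fun i hi => mem_iff_qE.2 ⟨i, hi, rfl⟩
  have hMok : ∀ p ∈ M, okQ p := hHypM.1
  have hchainE' : ∀ i j, i < j → j < m →
      qA (qE M i) < qA (qE M j) ∧ qB (qE M j) < qB (qE M i) := by
    intro i j hij hj
    rw [qE_eq_getElem (by omega), qE_eq_getElem (by omega)]
    exact (List.pairwise_iff_getElem.1 hchain) i j (by omega) (by omega) hij
  have hidx : ∀ p ∈ M, ∃ i0, i0 < k ∧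
      p = (gE π.a i0, gE π.b i0, gE π.c (π.t - 1 - i0), gE π.d (π.t - 1 - i0)) := by
    intro p hp
    obtain ⟨i0, hi0, hqE⟩ := mem_iff_qE.1 (hMsub.subset hp)
    rw [hpLlen] at hi0
    rw [pL_get hlex' hk2 hi0] at hqE
    exact ⟨i0, hi0, hqE.symm⟩
  have hEDsub : ∀ x ∈ (sigmaOf M).entryDual, x ∈ pairsOf M := by
    intro x hx
    have hx' : x ∈ (M.map qA).zip ((M.map qC).reverse).reverse ++
        (M.map qB).zip ((M.map qD).reverse).reverse ++
        ((M.map qC).reverse).zip (M.map qA).reverse ++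
        ((M.map qD).reverse).zip (M.map qB).reverse := hx
    rw [List.reverse_reverse, List.reverse_reverse] at hx'
    rcases List.mem_append.1 hx' with hx2 | hx2
    rotate_left
    · obtain ⟨i, hi1, hi2, rfl⟩ := mem_zip_elim hx2
      simp only [List.length_reverse, List.length_map] at hi1 hi2
      have e1 : gE ((M.map qD).reverse) i = qD (qE M (m - 1 - i)) := hσd i hi1
      have e2 : gE ((M.map qB).reverse) i = qB (qE M (m - 1 - i)) := by
        rw [gE, getD_reverse _ (by simpa using hi2)]
        simp only [List.length_map]
        exact gE_map_q (by omega)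
      rw [e1, e2]
      exact mem_pairsOf_db (hmemM _ (by omega))
    rcases List.mem_append.1 hx2 with hx3 | hx3
    rotate_left
    · obtain ⟨i, hi1, hi2, rfl⟩ := mem_zip_elim hx3
      simp only [List.length_reverse, List.length_map] at hi1 hi2
      have e1 : gE ((M.map qC).reverse) i = qC (qE M (m - 1 - i)) := hσc i hi1
      have e2 : gE ((M.map qA).reverse) i = qA (qE M (m - 1 - i)) := by
        rw [gE, getD_reverse _ (by simpa using hi2)]
        simp only [List.length_map]
        exact gE_map_q (by omega)
      rw [e1, e2]
      exact mem_pairsOf_ca (hmemM _ (by omega))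
    rcases List.mem_append.1 hx3 with hx4 | hx4
    · rw [List.zip_map'] at hx4
      obtain ⟨p, hp, rfl⟩ := List.mem_map.1 hx4
      exact mem_pairsOf_ac hp
    · rw [List.zip_map'] at hx4
      obtain ⟨p, hp, rfl⟩ := List.mem_map.1 hx4
      exact mem_pairsOf_bd hp
  refine ⟨⟨?_, ?_, ?_⟩, ?_, ?_, ?_⟩
  · -- SkewSymmLex σ
    refine ⟨⟨by simp [sigmaOf, ArrayPair.t], by simp [sigmaOf, ArrayPair.t],
        by simp [sigmaOf, ArrayPair.t]⟩, ?_, ?_, ?_, ?_, ?_, ?_, ?_⟩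
    · -- positivity
      intro x hx
      simp only [sigmaOf, List.mem_append, List.mem_reverse, List.mem_map] at hx
      rcases hx with ((⟨p, hp, rfl⟩ | ⟨p, hp, rfl⟩) | ⟨p, hp, rfl⟩) | ⟨p, hp, rfl⟩ <;>
        · have := hMok p hp
          rw [okQ] at this
          omega
    · -- LexTwoRow σ.b σ.a
      intro kk hkk
      simp only [sigmaOf, List.length_map] at hkk ⊢
      rw [hσb _ (by omega), hσb _ (by omega), hσa _ (by omega), hσa _ (by omega)]
      have h1 := hchainE' kk (kk + 1) (by omega) (by omega)
      exact ⟨by omega, fun h => by omega⟩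
    · -- LexTwoRow σ.d σ.c
      intro kk hkk
      simp only [sigmaOf, List.length_reverse, List.length_map] at hkk ⊢
      rw [hσd _ (by omega), hσd _ (by omega), hσc _ (by omega), hσc _ (by omega)]
      have h1 := hchainE' (m - 1 - (kk + 1)) (m - 1 - kk) (by omega) (by omega)
      have h2 := dual_D_lt hHypM (hmemM _ (by omega : m - 1 - kk < m))
        (hmemM _ (by omega : m - 1 - (kk + 1) < m)) h1.2
      exact ⟨by omega, fun h => by omega⟩
    · -- a vs d.reverse
      intro x hx
      simp only [sigmaOf] at hx
      rw [List.reverse_reverse, List.zip_map'] at hx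
      obtain ⟨p, hp, rfl⟩ := List.mem_map.1 hx
      exact (hMok p hp).2.2.1
    · -- b vs c.reverse
      intro x hx
      simp only [sigmaOf] at hx
      rw [List.reverse_reverse, List.zip_map'] at hx
      obtain ⟨p, hp, rfl⟩ := List.mem_map.1 hx
      exact (hMok p hp).2.2.2.1
    · -- duality
      exact dualityProp_mono hdual
        (fun x hx => pairs_pL_subset hlex' hk2 (pairsOf_subset hMsub.subset (hEDsub x hx)))
    · -- sign condition
      intro i hi
      rw [sigmaOf_t] at hi
      constructor
      · intro _
        show ((M.map qD).reverse).getD ((sigmaOf M).t - 1 - i) 0 <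
          ((M.map qC).reverse).getD ((sigmaOf M).t - 1 - i) 0
        rw [sigmaOf_t]
        rw [hσd _ (by omega), hσc _ (by omega),
          show m - 1 - (m - 1 - i) = i from by omega]
        exact (hMok _ (hmemM i hi)).2.2.2.2
      · intro hba
        exfalso
        have hba' : (M.map qB).getD i 0 < (M.map qA).getD i 0 := hba
        rw [hσa _ hi, hσb _ hi] at hba'
        have := (hMok _ (hmemM i hi)).2.1
        omega
  · -- Chain' (<) σ.a
    show List.Chain' (· < ·) (M.map qA)
    exact (hchain.map qA (fun a b h => h.1)).isChain
  · -- Chain' (>) σ.b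
    show List.Chain' (· > ·) (M.map qB)
    exact (hchain.map qB (fun a b h => h.2)).isChain
  · -- columns of σ among columns of the prefix (first arrays)
    intro x hx
    have hx' : x ∈ (M.map qA).zip (M.map qB) := hx
    rw [List.zip_map'] at hx'
    obtain ⟨p, hp, rfl⟩ := List.mem_map.1 hx'
    obtain ⟨i0, hi0, hpva⟩ := hidx p hp
    show (qA p, qB p) ∈ (π.a.take k).zip (π.b.take k)
    have h1 : gE (π.a.take k) i0 = qA p := by
      rw [gE, getD_take _ hi0, hpva]; rfl
    have h2 : gE (π.b.take k) i0 = qB p := by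
      rw [gE, getD_take _ hi0, hpva]; rfl
    have h3 := zip_mem_intro (l1 := π.a.take k) (l2 := π.b.take k) (i := i0)
      (by simp; omega) (by simp [hb]; omega)
    rwa [h1, h2] at h3
  · -- columns of σ among columns of the prefix (second arrays)
    intro x hx
    have hx' : x ∈ ((M.map qD).reverse).zip ((M.map qC).reverse) := hx
    obtain ⟨i, hi1, hi2, rfl⟩ := mem_zip_elim hx'
    simp only [List.length_reverse, List.length_map] at hi1 hi2
    have e1 : gE ((M.map qD).reverse) i = qD (qE M (m - 1 - i)) := hσd i hi1
    have e2 : gE ((M.map qC).reverse) i = qC (qE M (m - 1 - i)) := hσc i hi2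
    rw [e1, e2]
    obtain ⟨i0, hi0, hpva⟩ := hidx _ (hmemM _ (by omega : m - 1 - i < m))
    show (qD (qE M (m - 1 - i)), qC (qE M (m - 1 - i))) ∈
      (π.d.drop (π.t - k)).zip (π.c.drop (π.t - k))
    have h1 : gE (π.d.drop (π.t - k)) (k - 1 - i0) = qD (qE M (m - 1 - i)) := by
      rw [gE, getD_drop, hpva]
      show π.d.getD (π.t - k + (k - 1 - i0)) 0 = gE π.d (π.t - 1 - i0)
      rw [gE]; congr 1; omega
    have h2 : gE (π.c.drop (π.t - k)) (k - 1 - i0) = qC (qE M (m - 1 - i)) := by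
      rw [gE, getD_drop, hpva]
      show π.c.getD (π.t - k + (k - 1 - i0)) 0 = gE π.c (π.t - 1 - i0)
      rw [gE]; congr 1; omega
    have h3 := zip_mem_intro (l1 := π.d.drop (π.t - k)) (l2 := π.c.drop (π.t - k))
      (i := k - 1 - i0) (by simp [hd]; omega) (by simp [hc]; omega)
    rwa [h1, h2] at h3
  · -- the dual-column condition
    intro i hi
    rw [sigmaOf_t] at hi
    have hσbi : (sigmaOf M).b.getD i 0 = qB (qE M i) := hσb i hi
    have hσai : (sigmaOf M).a.getD i 0 = qA (qE M i) := hσa i hi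
    rw [hσbi, hσai]
    set p := qE M i with hpdef
    have hpM : p ∈ M := hmemM i hi
    obtain ⟨i0, hi0, hpva⟩ := hidx p hpM
    set Z := (π.prefixPair k).b.zip (π.prefixPair k).a with hZ
    have hZlen : Z.length = k := by
      rw [hZ]
      show ((π.b.take k).zip (π.a.take k)).length = k
      rw [List.length_zip]
      simp [hb, ha]
      omega
    have hZget : ∀ F, F < k → Z.getD F (0, 0) = (gE π.b F, gE π.a F) := by
      intro F hF
      rw [hZ]
      show ((π.b.take k).zip (π.a.take k)).getD F (0, 0) = _
      rw [getD_zip (by simp [hb]; omega) (by simp [ha]; omega), getD_take _ hF,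
        getD_take _ hF]
      rfl
    have hexZ : ∃ x ∈ Z, (x == (qB p, qA p)) = true := by
      have hmemz := zip_mem_intro (l1 := (π.prefixPair k).b) (l2 := (π.prefixPair k).a)
        (i := i0) (by simp [ArrayPair.prefixPair, hb]; omega)
        (by simp [ArrayPair.prefixPair, ha]; omega)
      refine ⟨_, hmemz, ?_⟩
      have hq : (gE (π.prefixPair k).b i0, gE (π.prefixPair k).a i0) = (qB p, qA p) := by
        show (gE (π.b.take k) i0, gE (π.a.take k) i0) = _
        rw [gE, gE, getD_take _ hi0, getD_take _ hi0, hpva]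
        rfl
      rw [hq]
      simp
    set F := Z.findIdx (fun x => x == (qB p, qA p)) with hFdef
    have hFlt : F < Z.length := List.findIdx_lt_length_of_exists hexZ
    have hpF := List.findIdx_getElem (w := hFlt)
    have hZF : Z[F] = (qB p, qA p) := eq_of_beq (by simpa using hpF)
    have hFk : F < k := by omega
    have hZF' : (gE π.b F, gE π.a F) = (qB p, qA p) := by
      rw [← hZget F hFk, getD_eq_getElem' _ (by omega), hZF]
    have hbF : gE π.b F = qB p := congrArg Prod.fst hZF'
    have haF : gE π.a F = qA p := congrArg Prod.snd hZF'
    have hmac : ∀ jj, jj < π.t → (gE π.a jj, gE π.c (π.t - 1 - jj)) ∈ π.entryDual := by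
      intro jj hjj
      have h3 := zip_mem_intro (l1 := π.a) (l2 := π.c.reverse) (i := jj)
        (by omega) (by simp [hc]; omega)
      have hrev : gE π.c.reverse jj = gE π.c (π.t - 1 - jj) := by
        rw [gE, getD_reverse _ (show jj < π.c.length by omega), hc]; rfl
      rw [hrev] at h3
      exact List.mem_append.2 (Or.inl (List.mem_append.2 (Or.inl
        (List.mem_append.2 (Or.inl h3)))))
    have hmbd : ∀ jj, jj < π.t → (gE π.b jj, gE π.d (π.t - 1 - jj)) ∈ π.entryDual := by
      intro jj hjj
      have h3 := zip_mem_intro (l1 := π.b) (l2 := π.d.reverse) (i := jj)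
        (by omega) (by simp [hd]; omega)
      have hrev : gE π.d.reverse jj = gE π.d (π.t - 1 - jj) := by
        rw [gE, getD_reverse _ (show jj < π.d.length by omega), hd]; rfl
      rw [hrev] at h3
      exact List.mem_append.2 (Or.inl (List.mem_append.2 (Or.inl
        (List.mem_append.2 (Or.inr h3)))))
    have hceq : gE π.c (π.t - 1 - F) = gE π.c (π.t - 1 - i0) := by
      have h1 := hmac F (by omega)
      have h2 := hmac i0 (by omega)
      have hfa : gE π.a F = gE π.a i0 := by
        rw [haF, hpva]
        rfl
      exact (hdual _ h1 _ h2).2.2 hfa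
    have hdeq : gE π.d (π.t - 1 - F) = gE π.d (π.t - 1 - i0) := by
      have h1 := hmbd F (by omega)
      have h2 := hmbd i0 (by omega)
      have hfb : gE π.b F = gE π.b i0 := by
        rw [hbF, hpva]
        rfl
      exact (hdual _ h1 _ h2).2.2 hfb
    have hL1 : (π.prefixPair k).c.getD ((π.prefixPair k).t - 1 - F) 0
        = gE π.c (π.t - 1 - F) := by
      rw [prefixPair_t hk2]
      show (π.c.drop (π.t - k)).getD (k - 1 - F) 0 = _
      rw [getD_drop, gE]
      congr 1
      omega
    have hL2 : (π.prefixPair k).d.getD ((π.prefixPair k).t - 1 - F) 0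
        = gE π.d (π.t - 1 - F) := by
      rw [prefixPair_t hk2]
      show (π.d.drop (π.t - k)).getD (k - 1 - F) 0 = _
      rw [getD_drop, gE]
      congr 1
      omega
    have hR1 : (sigmaOf M).c.getD ((sigmaOf M).t - 1 - i) 0 = qC p := by
      rw [sigmaOf_t]
      show ((M.map qC).reverse).getD (m - 1 - i) 0 = qC p
      rw [hσc _ (by omega), show m - 1 - (m - 1 - i) = i from by omega]
    have hR2 : (sigmaOf M).d.getD ((sigmaOf M).t - 1 - i) 0 = qD p := by
      rw [sigmaOf_t]
      show ((M.map qD).reverse).getD (m - 1 - i) 0 = qD p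
      rw [hσd _ (by omega), show m - 1 - (m - 1 - i) = i from by omega]
    rw [hL1, hL2, hR1, hR2, hceq, hdeq, hpva]
    rfl

end Stmt12Aux

/-- With `{U1,U2}` a pair of negative skew-symmetric multisets on ℕ²
(represented via ψ by `π`), `(P^(k),Q^(k)) := OBRSK(ψ⁻¹({U1^(k),U2^(k)}))`,
`p^(k)_1 < ⋯` and `q^(k)_1 < ⋯` the top rows of `P^(k)`, `Q^(k)`, and
`m(k) := #{m : p^(k)_m < q^(k)_1}` : for every `1 ≤ j ≤ m(k)` there exist a dual pair of
chains `{C1,C2}` in `{U1^(k),U2^(k)}` with at most `j` elements in each chain, and an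
integer `χ ≥ j`, such that the first coordinate of the `χ`-th element (in increasing order
of first coordinates) of `OBRSK(ψ⁻¹({C1,C2}))^up` equals `p^(k)_j`, and every first
coordinate of an element of `C1` occurs among the first coordinates of the first `χ`
elements of `OBRSK(ψ⁻¹({C1,C2}))^up`. -/
theorem stmt12 (π : ArrayPair) (hlex : π.SkewSymmLex) (hneg : π.Negative)
    (k : ℕ) (hk1 : 1 ≤ k) (hk2 : k ≤ π.t)
    (j : ℕ) (hj1 : 1 ≤ j)
    (hjm : j ≤ (((OBRSKneg (π.prefixPair k)).P.getD 0 []).filter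
        (fun x => decide (x < ((OBRSKneg (π.prefixPair k)).Q.getD 0 []).getD 0 0))).length) :
    ∃ σ : ArrayPair, DualChainIn (π.prefixPair k) σ ∧ σ.t ≤ j ∧
      ∃ χ : ℕ, j ≤ χ ∧
        ((OBRSKneg σ).P.getD 0 []).getD (χ - 1) 0
          = ((OBRSKneg (π.prefixPair k)).P.getD 0 []).getD (j - 1) 0 ∧
        ∀ x ∈ σ.a, x ∈ ((OBRSKneg σ).P.getD 0 []).take χ := by
  classical
  have hheads := Stmt12Aux.pL_heads (π := π) k
  have hHyp : Stmt12Aux.Hyp (Stmt12Aux.pL π k) := Stmt12Aux.hyp_pL hlex hneg hk2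
  have inv := Stmt12Aux.inv_runS hHyp
  have hmono : ∀ i j', i ≤ j' → j' < (Stmt12Aux.fP (Stmt12Aux.pL π k)).length →
      Stmt12Aux.gE (Stmt12Aux.fP (Stmt12Aux.pL π k)) i ≤
        Stmt12Aux.gE (Stmt12Aux.fP (Stmt12Aux.pL π k)) j' := inv.mono
  rw [hheads.1, hheads.2] at hjm
  obtain ⟨hjlen, hjval⟩ := Stmt12Aux.filter_lt_bound hmono hj1 hjm
  obtain ⟨M, χ, wit⟩ := Stmt12Aux.main_abs (Stmt12Aux.pL π k) hHyp j hj1 hjlen hjval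
  refine ⟨Stmt12Aux.sigmaOf M, Stmt12Aux.build_sigma hlex hneg hk2 wit.sub wit.chain,
    ?_, χ, wit.hχ1, ?_, ?_⟩
  · rw [Stmt12Aux.sigmaOf_t]
    exact wit.card
  · rw [Stmt12Aux.sigmaOf_head, hheads.1]
    exact wit.real
  · intro x hx
    rw [Stmt12Aux.sigmaOf_head]
    exact wit.amem x hx
end

section
/- Let d be a positive integer and β ∈ Ĩ(d). Then the map (R,S) ↦ R ∪̇ (β ∖ S) is a bijection from I_β(Skew-symm) onto Ĩ(d), with inverse map θ ↦ (θ ∖ β, β ∖ θ); moreover the pair (∅,∅) maps to β. -/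
open OBRSKPaper

private lemma injOn_star (d : ℕ) {S : Finset ℕ} (hS : ∀ s ∈ S, 1 ≤ s ∧ s ≤ 2*d) :
    Set.InjOn (fun s => 2*d+1-s) ↑S := by
  intro a ha b hb h
  have := hS a ha; have := hS b hb
  simp only at h; omega

private lemma sort_image_rev (d : ℕ) {S : Finset ℕ} (hS : ∀ s ∈ S, 1 ≤ s ∧ s ≤ 2*d) :
    (S.image (fun s => 2*d+1-s)).sort (·≤·)
      = ((S.sort (·≤·)).map (fun s => 2*d+1-s)).reverse := by
  have hperm : ((S.image (fun s => 2*d+1-s)).sort (·≤·)).Perm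
      (((S.sort (·≤·)).map (fun s => 2*d+1-s)).reverse) := by
    apply Multiset.coe_eq_coe.mp
    rw [Finset.sort_eq, Finset.image_val_of_injOn (injOn_star d hS), Multiset.coe_reverse,
      ← Multiset.map_coe, Finset.sort_eq]
  have hsorted : (((S.sort (·≤·)).map (fun s => 2*d+1-s)).reverse).Pairwise (·≤·) := by
    rw [List.pairwise_reverse]
    exact List.Pairwise.map _ (fun a b hab => Nat.sub_le_sub_left hab _)
      (Finset.pairwise_sort S (·≤·))
  exact List.Perm.eq_of_pairwise' (Finset.pairwise_sort _ _) hsorted hperm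

private lemma cond_iff_image (d : ℕ) {R S : Finset ℕ} (hS : ∀ s ∈ S, 1 ≤ s ∧ s ≤ 2*d)
    (hc : R.card = S.card) :
    (∀ i < R.card,
        (R.sort (·≤·)).getD i 0 + (S.sort (·≤·)).getD (R.card - 1 - i) 0 = 2*d+1)
      ↔ R = S.image (fun s => 2*d+1-s) := by
  have hlenS : (S.sort (·≤·)).length = S.card := Finset.length_sort _
  have hlenR : (R.sort (·≤·)).length = R.card := Finset.length_sort _
  constructor
  · intro h
    have hsub : S.image (fun s => 2*d+1-s) ⊆ R := by
      intro x hx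
      obtain ⟨s, hsS, rfl⟩ := Finset.mem_image.mp hx
      obtain ⟨j, hj, hjs⟩ := List.mem_iff_getElem.mp ((Finset.mem_sort (·≤·)).mpr hsS)
      rw [hlenS] at hj
      have hi : R.card - 1 - (R.card - 1 - j) = j := by omega
      have h2 := h (R.card - 1 - j) (by omega)
      rw [hi] at h2
      have hs2d := hS s hsS
      have hgj : (S.sort (·≤·)).getD j 0 = s := by
        rw [List.getD_eq_getElem _ _ (by omega)]; exact hjs
      rw [hgj] at h2
      have hR : (R.sort (·≤·)).getD (R.card - 1 - j) 0 = 2*d+1-s := by omega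
      rw [← hR, List.getD_eq_getElem _ _ (by omega)]
      exact (Finset.mem_sort (·≤·)).mp (List.getElem_mem _)
    exact ((Finset.eq_of_subset_of_card_le hsub
      (by rw [Finset.card_image_of_injOn (injOn_star d hS)]; omega))).symm
  · rintro rfl i hi
    have hc2 : (S.image (fun s => 2*d+1-s)).card = S.card :=
      Finset.card_image_of_injOn (injOn_star d hS)
    rw [hc2] at hi ⊢
    rw [sort_image_rev d hS]
    have h1 : (((S.sort (·≤·)).map (fun s => 2*d+1-s)).reverse).getD i 0
        = 2*d+1 - (S.sort (·≤·)).getD (S.card - 1 - i) 0 := by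
      rw [List.getD_eq_getElem _ _ (by simp only [List.length_reverse, List.length_map, hlenS]; omega),
        List.getD_eq_getElem _ _ (by omega)]
      rw [List.getElem_reverse, List.getElem_map]
      simp only [List.length_map, hlenS]
    rw [h1]
    have hmem : (S.sort (·≤·)).getD (S.card - 1 - i) 0 ∈ S := by
      rw [List.getD_eq_getElem _ _ (by omega)]
      exact (Finset.mem_sort (·≤·)).mp (List.getElem_mem _)
    have := hS _ hmem
    omega

private lemma filter_sdiff' (p : ℕ → Prop) [DecidablePred p] (s t : Finset ℕ) :
    (s \ t).filter p = s.filter p \ t.filter p := by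
  ext x; simp only [Finset.mem_filter, Finset.mem_sdiff]; tauto

private lemma star_mem_Icc (d k : ℕ) (hk : k ∈ Finset.Icc 1 (2*d)) :
    2*d+1-k ∈ Finset.Icc 1 (2*d) := by
  rw [Finset.mem_Icc] at *; omega

private lemma mapsTo_lemma (d : ℕ) {β : Finset ℕ} (hβ : β ∈ Itilde d) {S : Finset ℕ}
    (hSβ : S ⊆ β) (hev : Even S.card) :
    S.image (fun s => 2*d+1-s) ∪ (β \ S) ∈ Itilde d := by
  obtain ⟨hβ1, hβ2, hβ3, hβ4⟩ := hβ
  have hSIcc : ∀ s ∈ S, 1 ≤ s ∧ s ≤ 2*d := by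
    intro s hs; have := hβ1 (hSβ hs); rwa [Finset.mem_Icc] at this
  have himβ : ∀ x ∈ S.image (fun s => 2*d+1-s), x ∉ β := by
    intro x hx
    obtain ⟨s, hs, rfl⟩ := Finset.mem_image.mp hx
    exact (hβ3 s (hβ1 (hSβ hs))).mp (hSβ hs)
  refine ⟨?_, ?_, ?_, ?_⟩
  · intro x hx
    rcases Finset.mem_union.mp hx with h | h
    · obtain ⟨s, hs, rfl⟩ := Finset.mem_image.mp h
      have := hSIcc s hs; rw [Finset.mem_Icc]; omega
    · exact hβ1 (Finset.mem_sdiff.mp h).1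
  · rw [Finset.card_union_of_disjoint, Finset.card_image_of_injOn (injOn_star d hSIcc),
      Finset.card_sdiff_of_subset hSβ, hβ2]
    · have : S.card ≤ d := hβ2 ▸ Finset.card_le_card hSβ
      omega
    · rw [Finset.disjoint_left]
      intro x hx hx2
      exact himβ x hx (Finset.mem_sdiff.mp hx2).1
  · intro k hk
    have hkb := Finset.mem_Icc.mp hk
    have hfk := star_mem_Icc d k hk
    have hfkb := Finset.mem_Icc.mp hfk
    have hd1 := hβ3 k hk
    have hinj : ∀ s ∈ S, 2*d+1-s = 2*d+1-k → s = k := by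
      intro s hs h; have := hSIcc s hs; omega
    have him1 : k ∈ S.image (fun s => 2*d+1-s) ↔ (2*d+1-k) ∈ S := by
      constructor
      · intro h
        obtain ⟨s, hs, hsk⟩ := Finset.mem_image.mp h
        have := hSIcc s hs
        have : s = 2*d+1-k := by omega
        rwa [← this]
      · intro h
        refine Finset.mem_image.mpr ⟨2*d+1-k, h, by omega⟩
    have him2 : (2*d+1-k) ∈ S.image (fun s => 2*d+1-s) ↔ k ∈ S := by
      constructor
      · intro h
        obtain ⟨s, hs, hsk⟩ := Finset.mem_image.mp h
        have := hSIcc s hs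
        have : s = k := by omega
        rwa [← this]
      · intro h
        exact Finset.mem_image.mpr ⟨k, h, rfl⟩
    by_cases hkβ : k ∈ β
    · have hfkβ : (2*d+1-k) ∉ β := hd1.mp hkβ
      simp only [Finset.mem_union, Finset.mem_sdiff, him1, him2]
      constructor
      · rintro (h | ⟨-, hkS⟩) (h2 | ⟨h3, -⟩)
        · exact himβ k (him1.mpr h) hkβ
        · exact hfkβ h3
        · exact hkS h2
        · exact hfkβ h3
      · intro h
        right
        refine ⟨hkβ, fun hkS => h (Or.inl hkS)⟩
    · have hfkβ : (2*d+1-k) ∈ β := by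
        have := hβ3 (2*d+1-k) hfk
        have h2 : 2*d+1-(2*d+1-k) = k := by omega
        rw [h2] at this; tauto
      simp only [Finset.mem_union, Finset.mem_sdiff, him1, him2]
      constructor
      · rintro (h | ⟨h2, -⟩) (h3 | ⟨-, h4⟩)
        · exact himβ (2*d+1-k) (him2.mpr h3) hfkβ
        · exact h4 h
        · exact hkβ h2
        · exact hkβ h2
      · intro h
        left
        by_contra hkS
        exact h (Or.inr ⟨hfkβ, hkS⟩)
  · -- parity
    have hdisj : Disjoint (S.image (fun s => 2*d+1-s)) (β \ S) := by
      rw [Finset.disjoint_left]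
      intro x hx hx2
      exact himβ x hx (Finset.mem_sdiff.mp hx2).1
    rw [Finset.filter_union, Finset.card_union_of_disjoint
      (Finset.disjoint_filter_filter hdisj)]
    have h1 : (S.image (fun s => 2*d+1-s)).filter (fun x => d < x)
        = (S.filter (fun s => ¬ d < s)).image (fun s => 2*d+1-s) := by
      ext x
      simp only [Finset.mem_filter, Finset.mem_image]
      constructor
      · rintro ⟨⟨s, hs, rfl⟩, hd2⟩
        exact ⟨s, ⟨hs, by have := hSIcc s hs; omega⟩, rfl⟩
      · rintro ⟨s, ⟨hs, hsd⟩, rfl⟩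
        exact ⟨⟨s, hs, rfl⟩, by have := hSIcc s hs; omega⟩
    have h2 : (β \ S).filter (fun x => d < x) = β.filter (fun x => d < x) \ S.filter (fun x => d < x) :=
      filter_sdiff' _ _ _
    rw [h1, h2, Finset.card_image_of_injOn
      (injOn_star d (fun s hs => hSIcc s (Finset.mem_filter.mp hs).1))]
    have e1 := Finset.card_filter_add_card_filter_not (s := S) (p := fun s => d < s)
    have e2 : (S.filter (fun x => d < x)) ⊆ (β.filter (fun x => d < x)) :=
      Finset.filter_subset_filter _ hSβ
    rw [Finset.card_sdiff_of_subset e2]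
    have e3 : (S.filter (fun x => d < x)).card ≤ (β.filter (fun x => d < x)).card :=
      Finset.card_le_card e2
    rw [Nat.even_iff] at hev hβ4 ⊢
    omega

private lemma IbSS_char (d : ℕ) {β : Finset ℕ} (hβ : β ∈ Itilde d) {R S : Finset ℕ} :
    (R, S) ∈ IbSS d β ↔ S ⊆ β ∧ Even S.card ∧ R = S.image (fun s => 2*d+1-s) := by
  obtain ⟨hβ1, hβ2, hβ3, hβ4⟩ := hβ
  constructor
  · rintro ⟨h1, h2, h3, h4, h5⟩
    have hSIcc : ∀ s ∈ S, 1 ≤ s ∧ s ≤ 2*d := by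
      intro s hs; have := hβ1 (h2 hs); rwa [Finset.mem_Icc] at this
    exact ⟨h2, h3 ▸ h4, (cond_iff_image d hSIcc h3).mp h5⟩
  · rintro ⟨h2, h4, rfl⟩
    have hSIcc : ∀ s ∈ S, 1 ≤ s ∧ s ≤ 2*d := by
      intro s hs; have := hβ1 (h2 hs); rwa [Finset.mem_Icc] at this
    have hc : (S.image (fun s => 2*d+1-s)).card = S.card :=
      Finset.card_image_of_injOn (injOn_star d hSIcc)
    refine ⟨?_, h2, hc, hc ▸ h4, (cond_iff_image d hSIcc hc).mpr rfl⟩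
    intro x hx
    obtain ⟨s, hs, rfl⟩ := Finset.mem_image.mp hx
    have hb := hSIcc s hs
    rw [Finset.mem_sdiff, Finset.mem_Icc]
    exact ⟨⟨by omega, by omega⟩, (hβ3 s (hβ1 (h2 hs))).mp (h2 hs)⟩

private lemma inv_lemma (d : ℕ) {β : Finset ℕ} {R S : Finset ℕ}
    (hR : R ⊆ Finset.Icc 1 (2*d) \ β) (hS : S ⊆ β) :
    (R ∪ (β \ S)) \ β = R ∧ β \ (R ∪ (β \ S)) = S := by
  have hRβ : ∀ x ∈ R, x ∉ β := fun x hx => (Finset.mem_sdiff.mp (hR hx)).2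
  constructor
  · ext x
    simp only [Finset.mem_sdiff, Finset.mem_union]
    constructor
    · rintro ⟨h1 | ⟨h2, -⟩, h3⟩
      · exact h1
      · exact absurd h2 h3
    · intro h; exact ⟨Or.inl h, hRβ x h⟩
  · ext x
    simp only [Finset.mem_sdiff, Finset.mem_union]
    constructor
    · rintro ⟨h1, h2⟩
      by_contra hxS
      exact h2 (Or.inr ⟨h1, hxS⟩)
    · intro h
      exact ⟨hS h, by rintro (h1 | ⟨-, h2⟩); exacts [hRβ x h1 (hS h), h2 h]⟩

private lemma surj_lemma (d : ℕ) {β : Finset ℕ} (hβ : β ∈ Itilde d) {θ : Finset ℕ}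
    (hθ : θ ∈ Itilde d) :
    (θ \ β, β \ θ) ∈ IbSS d β ∧ (θ \ β) ∪ (β \ (β \ θ)) = θ := by
  obtain ⟨hβ1, hβ2, hβ3, hβ4⟩ := hβ
  obtain ⟨hθ1, hθ2, hθ3, hθ4⟩ := hθ
  have hmemIcc : ∀ x ∈ β, 1 ≤ x ∧ x ≤ 2*d := fun x hx => Finset.mem_Icc.mp (hβ1 hx)
  have hmemIccθ : ∀ x ∈ θ, 1 ≤ x ∧ x ≤ 2*d := fun x hx => Finset.mem_Icc.mp (hθ1 hx)
  -- R = S.image f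
  have himg : θ \ β = (β \ θ).image (fun s => 2*d+1-s) := by
    ext x
    simp only [Finset.mem_sdiff, Finset.mem_image]
    constructor
    · rintro ⟨hxθ, hxβ⟩
      have hxI := hθ1 hxθ
      have hb := hmemIccθ x hxθ
      refine ⟨2*d+1-x, ⟨?_, ?_⟩, by omega⟩
      · have := hβ3 x hxI; tauto
      · intro h
        exact (hθ3 (2*d+1-x) (star_mem_Icc d x hxI)).mp h (by rwa [show 2*d+1-(2*d+1-x) = x by omega])
    · rintro ⟨s, ⟨hsβ, hsθ⟩, rfl⟩
      have hsI := hβ1 hsβ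
      have hb := hmemIcc s hsβ
      constructor
      · have := hθ3 s hsI; tauto
      · exact (hβ3 s hsI).mp hsβ
  -- parity
  have hev : Even (β \ θ).card := by
    have hA : (θ \ β).filter (fun x => d < x)
        = θ.filter (fun x => d < x) \ β.filter (fun x => d < x) := filter_sdiff' _ _ _
    have hB : (β \ θ).filter (fun x => d < x)
        = β.filter (fun x => d < x) \ θ.filter (fun x => d < x) := filter_sdiff' _ _ _
    have himg2 : ((β \ θ).filter (fun x => ¬ d < x)).image (fun s => 2*d+1-s)
        = (θ \ β).filter (fun x => d < x) := by
      ext x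
      simp only [Finset.mem_filter, Finset.mem_image, Finset.mem_sdiff]
      constructor
      · rintro ⟨s, ⟨⟨hsβ, hsθ⟩, hsd⟩, rfl⟩
        have hb := hmemIcc s hsβ
        have hsI := hβ1 hsβ
        refine ⟨⟨?_, (hβ3 s hsI).mp hsβ⟩, by omega⟩
        · have := hθ3 s hsI; tauto
      · rintro ⟨⟨hxθ, hxβ⟩, hxd⟩
        have hb := hmemIccθ x hxθ
        have hxI := hθ1 hxθ
        refine ⟨2*d+1-x, ⟨⟨?_, ?_⟩, by omega⟩, by omega⟩
        · have := hβ3 x hxI; tauto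
        · intro h
          exact (hθ3 (2*d+1-x) (star_mem_Icc d x hxI)).mp h
            (by rwa [show 2*d+1-(2*d+1-x) = x by omega])
    have hcnt : ((β \ θ).filter (fun x => ¬ d < x)).card
        = ((θ \ β).filter (fun x => d < x)).card := by
      rw [← himg2]
      exact (Finset.card_image_of_injOn (injOn_star d (fun s hs =>
        hmemIcc s (Finset.mem_sdiff.mp (Finset.mem_filter.mp hs).1).1))).symm
    have e0 := Finset.card_filter_add_card_filter_not
      (s := β \ θ) (p := fun x => d < x)
    have e1 : (θ.filter (fun x => d < x) \ β.filter (fun x => d < x)).card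
        + (θ.filter (fun x => d < x) ∩ β.filter (fun x => d < x)).card
        = (θ.filter (fun x => d < x)).card := Finset.card_sdiff_add_card_inter _ _
    have e2 : (β.filter (fun x => d < x) \ θ.filter (fun x => d < x)).card
        + (β.filter (fun x => d < x) ∩ θ.filter (fun x => d < x)).card
        = (β.filter (fun x => d < x)).card := Finset.card_sdiff_add_card_inter _ _
    have e3 : (θ.filter (fun x => d < x) ∩ β.filter (fun x => d < x)).card
        = (β.filter (fun x => d < x) ∩ θ.filter (fun x => d < x)).card := by
      rw [Finset.inter_comm]
    rw [Nat.even_iff] at hβ4 hθ4 ⊢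
    rw [hA] at hcnt
    rw [hB] at e0
    omega
  have hmem : (θ \ β, β \ θ) ∈ IbSS d β :=
    (IbSS_char d ⟨hβ1, hβ2, hβ3, hβ4⟩).mpr ⟨Finset.sdiff_subset, hev, himg⟩
  refine ⟨hmem, ?_⟩
  rw [Finset.sdiff_sdiff_self_left]
  ext x
  simp only [Finset.mem_union, Finset.mem_sdiff, Finset.mem_inter]
  tauto

/-- For `β ∈ Ĩ(d)`, the map `(R,S) ↦ R ∪̇ (β ∖ S)` is a bijection from
`I_β(Skew-symm)` onto `Ĩ(d)`, with inverse `θ ↦ (θ ∖ β, β ∖ θ)`; moreover `(∅,∅)` maps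
to `β`. -/
theorem stmt14 (d : ℕ) (hd : 0 < d) (β : Finset ℕ) (hβ : β ∈ Itilde d) :
    Set.BijOn (fun RS : Finset ℕ × Finset ℕ => RS.1 ∪ (β \ RS.2)) (IbSS d β) (Itilde d) ∧
    (∀ RS ∈ IbSS d β,
      ((RS.1 ∪ (β \ RS.2)) \ β, β \ (RS.1 ∪ (β \ RS.2))) = RS) ∧
    (∀ θ ∈ Itilde d,
      (θ \ β, β \ θ) ∈ IbSS d β ∧ (θ \ β) ∪ (β \ (β \ θ)) = θ) ∧
    ((∅, ∅) : Finset ℕ × Finset ℕ) ∈ IbSS d β ∧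
    ((∅ : Finset ℕ) ∪ (β \ (∅ : Finset ℕ))) = β := by
  have hinv : ∀ RS ∈ IbSS d β,
      ((RS.1 ∪ (β \ RS.2)) \ β, β \ (RS.1 ∪ (β \ RS.2))) = RS := by
    rintro ⟨R, S⟩ ⟨h1, h2, -, -, -⟩
    obtain ⟨e1, e2⟩ := inv_lemma d h1 h2
    simp only [e1, e2]
  have hmaps : Set.MapsTo (fun RS : Finset ℕ × Finset ℕ => RS.1 ∪ (β \ RS.2))
      (IbSS d β) (Itilde d) := by
    rintro ⟨R, S⟩ h
    obtain ⟨hSβ, hev, rfl⟩ := (IbSS_char d hβ).mp h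
    exact mapsTo_lemma d hβ hSβ hev
  refine ⟨⟨hmaps, ?_, ?_⟩, hinv, fun θ hθ => surj_lemma d hβ hθ, ?_, by simp⟩
  · intro x hx y hy hxy
    have e1 := hinv x hx
    have e2 := hinv y hy
    simp only at hxy
    rw [← e1, ← e2, hxy]
  · intro θ hθ
    exact ⟨(θ \ β, β \ θ), (surj_lemma d hβ hθ).1, (surj_lemma d hβ hθ).2⟩
  · exact (IbSS_char d hβ).mpr ⟨Finset.empty_subset _, by simp, by simp⟩
end
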